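/- arXiv:2311.06294 — 6 statements merged into one kernel-verified Lean document; each statement's English description precedes it below -/
import Mathlib

section
/- The series of H(k)/k^2 over positive integers k converges to 2ζ(3), where H(k) is the k-th harmonic number. -/
open scoped BigOperators

/-- The harmonic number `H k = ∑_{j=1}^k 1/j`. -/
noncomputable def H (k : ℕ) : ℝ := ∑ j ∈ Finset.Icc 1 k, (1 : ℝ) / j

/-- The generalized harmonic number `H^{(p)} k = ∑_{j=1}^k 1/j^p`. -/
noncomputable def Hgen (p k : ℕ) : ℝ := ∑ j ∈ Finset.Icc 1 k, (1 : ℝ) / (j : ℝ) ^ p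

open Filter Topology Finset

lemma H_eq_range (m : ℕ) : H m = ∑ i ∈ range m, (1 : ℝ) / (i + 1) := by
  unfold H
  rw [← Finset.Ico_add_one_right_eq_Icc, Finset.sum_Ico_eq_sum_range]
  simp [add_comm]

lemma H_succ (m : ℕ) : H (m + 1) = H m + 1 / (m + 1) := by
  simp [H_eq_range, Finset.sum_range_succ]

lemma telescope_partial (u : ℕ → ℝ) (m n : ℕ) :
    ∑ k ∈ range n, (u k - u (k + m)) =
      ∑ i ∈ range m, u i - ∑ i ∈ range m, u (n + i) := by
  induction n with
  | zero => simp
  | succ n ih =>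
      rw [Finset.sum_range_succ, ih]
      have h1 : ∑ i ∈ range (m + 1), u (n + i) =
          ∑ i ∈ range m, u (n + (i + 1)) + u (n + 0) := Finset.sum_range_succ' _ _
      have h1' : ∑ i ∈ range m, u (n + (i + 1)) = ∑ i ∈ range m, u (n + 1 + i) :=
        Finset.sum_congr rfl fun i _ => by rw [show n + (i+1) = n+1+i from by omega]
      have h2 : ∑ i ∈ range (m + 1), u (n + i) =
          ∑ i ∈ range m, u (n + i) + u (n + m) := Finset.sum_range_succ _ _
      rw [h1'] at h1
      simp only [add_zero] at h1
      linarith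

lemma telescope_hasSum (m : ℕ) :
    HasSum (fun k : ℕ => 1 / ((k : ℝ) + 1) - 1 / ((k : ℝ) + m + 1)) (H m) := by
  set u : ℕ → ℝ := fun k => 1 / ((k : ℝ) + 1) with hu
  have hnn : ∀ k : ℕ, 0 ≤ 1 / ((k : ℝ) + 1) - 1 / ((k : ℝ) + m + 1) := by
    intro k
    have h1 : (0:ℝ) < (k : ℝ) + 1 := by positivity
    have : 1 / ((k : ℝ) + m + 1) ≤ 1 / ((k : ℝ) + 1) := by
      apply one_div_le_one_div_of_le h1
      have : (0:ℝ) ≤ (m:ℝ) := Nat.cast_nonneg m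
      linarith
    linarith
  rw [hasSum_iff_tendsto_nat_of_nonneg hnn]
  have key : ∀ n : ℕ, ∑ k ∈ range n, (1 / ((k : ℝ) + 1) - 1 / ((k : ℝ) + m + 1)) =
      ∑ i ∈ range m, u i - ∑ i ∈ range m, u (n + i) := by
    intro n
    rw [← telescope_partial u m n]
    refine Finset.sum_congr rfl fun k _ => ?_
    simp only [hu]
    push_cast
    ring_nf
  simp only [key]
  rw [H_eq_range]
  have hten : Filter.Tendsto (fun n : ℕ => ∑ i ∈ range m, u (n + i)) atTop (𝓝 0) := by
    have h1 : ∀ i : ℕ, Filter.Tendsto (fun n : ℕ => u (n + i)) atTop (𝓝 0) := by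
      intro i
      have := (tendsto_one_div_add_atTop_nhds_zero_nat (𝕜 := ℝ)).comp (tendsto_add_atTop_nat i)
      refine this.congr fun n => ?_
      simp only [Function.comp_apply, hu]
      try push_cast
      try ring_nf
    have := tendsto_finset_sum (range m) (fun i _ => h1 i)
    simpa using this
  have := Filter.Tendsto.const_sub (∑ i ∈ range m, u i) hten
  simpa [hu, one_div] using this

noncomputable def f2 (p : ℕ × ℕ) : ℝ :=
  1 / (((p.1 : ℝ) + 1) * ((p.2 : ℝ) + 1) * ((p.1 : ℝ) + (p.2 : ℝ) + 2))

lemma f2_nonneg (p : ℕ × ℕ) : 0 ≤ f2 p := by unfold f2; positivity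

noncomputable def g32 (n : ℕ) : ℝ := 1 / ((n : ℝ) + 1) ^ (3/2 : ℝ)

lemma g32_nonneg (n : ℕ) : 0 ≤ g32 n := by
  unfold g32; positivity

lemma g32_summable : Summable g32 := by
  have h : Summable (fun n : ℕ => 1 / (n : ℝ) ^ (3/2 : ℝ)) :=
    Real.summable_one_div_nat_rpow.2 (by norm_num)
  have := (summable_nat_add_iff 1).2 h
  refine this.congr fun n => ?_
  unfold g32
  push_cast
  ring_nf

lemma f2_le (p : ℕ × ℕ) : f2 p ≤ g32 p.1 * g32 p.2 := by
  obtain ⟨j, k⟩ := p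
  unfold f2 g32
  simp only
  set a : ℝ := (j : ℝ) + 1 with ha
  set b : ℝ := (k : ℝ) + 1 with hb
  have hap : (0:ℝ) < a := by positivity
  have hbp : (0:ℝ) < b := by positivity
  have habp : (0:ℝ) < a * b := mul_pos hap hbp
  have hr : ∀ x : ℝ, 0 < x → x ^ (3/2 : ℝ) = x * Real.sqrt x := by
    intro x hx
    rw [show (3/2 : ℝ) = 1 + 1/2 by norm_num, Real.rpow_add hx, Real.rpow_one,
      ← Real.sqrt_eq_rpow]
  have key : (1 / a ^ (3/2:ℝ)) * (1 / b ^ (3/2:ℝ)) = 1 / ((a * b) * Real.sqrt (a * b)) := by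
    rw [div_mul_div_comm, one_mul, hr a hap, hr b hbp, Real.sqrt_mul hap.le]
    ring_nf
  rw [key]
  have hsq : Real.sqrt (a * b) ≤ a + b := by
    have h1 : a * b ≤ (a + b) ^ 2 := by nlinarith
    calc Real.sqrt (a * b) ≤ Real.sqrt ((a+b)^2) := Real.sqrt_le_sqrt h1
      _ = a + b := Real.sqrt_sq (by positivity)
  have hab2 : (j:ℝ) + (k:ℝ) + 2 = a + b := by rw [ha, hb]; ring
  rw [hab2]
  apply one_div_le_one_div_of_le
  · positivity
  · have hs : 0 < Real.sqrt (a*b) := Real.sqrt_pos.2 habp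
    nlinarith

lemma f2_summable : Summable f2 :=
  Summable.of_nonneg_of_le f2_nonneg f2_le
    (g32_summable.mul_of_nonneg g32_summable g32_nonneg g32_nonneg)

/-- fiberwise sum over k, for fixed j -/
lemma f2_fiber (j : ℕ) :
    HasSum (fun k : ℕ => f2 (j, k)) (H (j+1) / ((j:ℝ)+1)^2) := by
  have h := (telescope_hasSum (j+1)).mul_left (1 / ((j:ℝ)+1)^2)
  have heq : ∀ k : ℕ, 1 / ((j:ℝ)+1)^2 * (1/((k:ℝ)+1) - 1/((k:ℝ)+((j+1:ℕ):ℝ)+1)) = f2 (j,k) := by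
    intro k
    unfold f2
    simp only
    push_cast
    have hk : ((k:ℝ)+1) ≠ 0 := by positivity
    have hj : ((j:ℝ)+1) ≠ 0 := by positivity
    have hc : ((j:ℝ)+(k:ℝ)+2) ≠ 0 := by positivity
    field_simp
    ring
  have h2 : HasSum (fun k : ℕ => f2 (j, k)) (1 / ((j:ℝ)+1)^2 * H (j+1)) := by
    simpa only [heq] using h
  have hv : H (j+1) / ((j:ℝ)+1)^2 = 1 / ((j:ℝ)+1)^2 * H (j+1) := by ring
  rw [hv]
  exact h2

/-- The double sum computed by rows equals ∑ H(j+1)/(j+1)^2. -/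
lemma sumA : HasSum (fun j : ℕ => H (j+1) / ((j:ℝ)+1)^2) (∑' p, f2 p) :=
  f2_summable.hasSum.prod_fiberwise f2_fiber

def diagEquiv : (Σ n : ℕ, Fin (n+1)) ≃ ℕ × ℕ where
  toFun x := (x.2, x.1 - x.2)
  invFun p := ⟨p.1 + p.2, ⟨p.1, by omega⟩⟩
  left_inv := by
    rintro ⟨n, ⟨i, hi⟩⟩
    have hi' : i ≤ n := Nat.lt_succ_iff.mp hi
    refine Sigma.ext ?_ ?_
    · show i + (n - i) = n
      omega
    · rw [Fin.heq_ext_iff (show i + (n - i) + 1 = n + 1 by omega)]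
  right_inv := by
    rintro ⟨j, k⟩
    simp

lemma diag_sum (n : ℕ) :
    ∑ i ∈ range (n+1), f2 (i, n - i) = 2 * H (n+1) / ((n:ℝ)+2)^2 := by
  have key : ∀ i ∈ range (n+1), f2 (i, n - i) =
      (1/((n:ℝ)+2)^2) * (1/((i:ℝ)+1) + 1/(((n-i : ℕ):ℝ)+1)) := by
    intro i hi
    rw [mem_range] at hi
    have hle : i ≤ n := by omega
    have hcast : ((n - i : ℕ):ℝ) = (n:ℝ) - i := by
      rw [Nat.cast_sub hle]
    unfold f2
    simp only [hcast]
    have hli : (i:ℝ) ≤ (n:ℝ) := by exact_mod_cast hle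
    have h1 : ((i:ℝ)+1) ≠ 0 := by positivity
    have h2 : ((n:ℝ) - i + 1) ≠ 0 := by intro h; linarith
    have h3 : ((n:ℝ) + 2) ≠ 0 := by positivity
    have h4 : ((i:ℝ) + ((n:ℝ) - (i:ℝ)) + 2) = (n:ℝ)+2 := by ring
    rw [h4]
    field_simp
    ring
  rw [Finset.sum_congr rfl key, ← Finset.mul_sum, Finset.sum_add_distrib]
  have hrefl : ∑ i ∈ range (n+1), 1/(((n-i : ℕ):ℝ)+1) =
      ∑ i ∈ range (n+1), 1/((i:ℝ)+1) := by
    rw [← Finset.sum_range_reflect (fun i => 1/((i:ℝ)+1)) (n+1)]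
    refine Finset.sum_congr rfl fun i hi => ?_
    rw [mem_range] at hi
    simp [Nat.add_sub_cancel]
  rw [hrefl, ← H_eq_range]
  ring

lemma sumB : HasSum (fun n : ℕ => 2 * H (n+1) / ((n:ℝ)+2)^2) (∑' p, f2 p) := by
  have hσ : HasSum (f2 ∘ diagEquiv) (∑' p, f2 p) :=
    diagEquiv.hasSum_iff.2 f2_summable.hasSum
  refine HasSum.sigma hσ fun n => ?_
  have hfin := hasSum_fintype (fun i : Fin (n+1) => (f2 ∘ diagEquiv) ⟨n, i⟩)
  have : ∑ i : Fin (n+1), (f2 ∘ diagEquiv) ⟨n, i⟩ = 2 * H (n+1) / ((n:ℝ)+2)^2 := by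
    have e : ∑ i : Fin (n+1), (f2 ∘ ⇑diagEquiv) ⟨n, i⟩
        = ∑ i : Fin (n+1), f2 (↑i, n - ↑i) := rfl
    rw [e, Fin.sum_univ_eq_sum_range (fun i => f2 (i, n - i)) (n+1)]
    exact diag_sum n
  rwa [this] at hfin

lemma H_one : H 1 = 1 := by simp [H]

lemma z3_summable : Summable (fun n : ℕ => 1 / ((n:ℝ)+1)^3) := by
  have h : Summable (fun n : ℕ => 1 / (n:ℝ) ^ (3:ℕ)) := by
    rw [Real.summable_one_div_nat_pow]
    norm_num
  have := (summable_nat_add_iff 1).2 h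
  refine this.congr fun n => ?_
  push_cast
  ring_nf

noncomputable def z3 : ℝ := ∑' n : ℕ, 1 / ((n:ℝ)+1)^3

lemma z3_hasSum : HasSum (fun n : ℕ => 1 / ((n:ℝ)+1)^3) z3 := z3_summable.hasSum

lemma S_eq : (∑' p, f2 p) = 2 * z3 := by
  set S := ∑' p, f2 p with hS
  -- shifted versions
  have hA1 : HasSum (fun n : ℕ => H (n+2) / ((n:ℝ)+2)^2) (S - 1) := by
    have h2 : HasSum (fun j : ℕ => H (j+1) / ((j:ℝ)+1)^2) ((S - 1) + ∑ i ∈ range 1,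
        H (i+1) / ((i:ℝ)+1)^2) := by
      have : (S - 1) + ∑ i ∈ range 1, H (i+1) / ((i:ℝ)+1)^2 = S := by
        simp [H_one]
      rw [this]
      exact sumA
    have h3 := (hasSum_nat_add_iff (f := fun j : ℕ => H (j+1) / ((j:ℝ)+1)^2) 1).2 h2
    refine h3.congr_fun fun n => ?_
    push_cast
    try norm_num
    try ring_nf
  have hz1 : HasSum (fun n : ℕ => 1 / ((n:ℝ)+2)^3) (z3 - 1) := by
    have h2 : HasSum (fun n : ℕ => 1 / ((n:ℝ)+1)^3) ((z3 - 1) + ∑ i ∈ range 1,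
        1 / ((i:ℝ)+1)^3) := by
      have : (z3 - 1) + ∑ i ∈ range 1, 1 / ((i:ℝ)+1)^3 = z3 := by norm_num
      rw [this]
      exact z3_hasSum
    have h3 := (hasSum_nat_add_iff (f := fun n : ℕ => 1 / ((n:ℝ)+1)^3) 1).2 h2
    refine h3.congr_fun fun n => ?_
    push_cast
    try norm_num
    try ring_nf
  have hC : HasSum (fun n : ℕ => 2 * H (n+1) / ((n:ℝ)+2)^2) (2 * ((S - 1) - (z3 - 1))) := by
    have h := (hA1.sub hz1).mul_left 2
    refine h.congr_fun fun n => ?_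
    have hne : ((n:ℝ)+2) ≠ 0 := by positivity
    rw [H_succ (n+1)]
    push_cast
    field_simp
    ring
  have := hC.unique sumB
  rw [hS] at this ⊢
  linarith

lemma sumA' : HasSum (fun j : ℕ => H (j+1) / ((j:ℝ)+1)^2) (2 * z3) := S_eq ▸ sumA

lemma zeta3_eq : riemannZeta 3 = (z3 : ℂ) := by
  have h3 : ((3:ℕ):ℂ) = (3:ℂ) := by norm_num
  have hz := zeta_nat_eq_tsum_of_gt_one (k := 3) (by norm_num)
  rw [h3] at hz
  rw [hz]
  have hC : HasSum (fun n : ℕ => 1 / ((n:ℂ)+1)^3) ((z3 : ℂ)) := by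
    have := (Complex.hasSum_ofReal (f := fun n : ℕ => 1 / ((n:ℝ)+1)^3)
      (x := z3)).2 z3_hasSum
    refine this.congr_fun fun n => ?_
    push_cast
    ring
  have hC' : HasSum (fun n : ℕ => 1 / ((n:ℂ))^3) ((z3 : ℂ)) := by
    have h2 : HasSum (fun n : ℕ => 1 / (((n+1:ℕ)):ℂ)^3) ((z3:ℂ)) := by
      refine hC.congr_fun fun n => ?_
      push_cast
      ring
    have h3' := (hasSum_nat_add_iff (f := fun n : ℕ => 1 / ((n:ℂ))^3) 1).1 h2
    simpa using h3'
  rw [hC'.tsum_eq]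

theorem euler_sum_0 :
    HasSum (fun k : ℕ => (H (k+1) : ℂ) / ((k : ℂ) + 1) ^ 2) (2 * riemannZeta 3) := by
  rw [zeta3_eq]
  have h := (Complex.hasSum_ofReal (f := fun j : ℕ => H (j+1) / ((j:ℝ)+1)^2)
    (x := 2 * z3)).2 sumA'
  have hv : ((2 * z3 : ℝ) : ℂ) = 2 * (z3 : ℂ) := by push_cast; ring
  rw [hv] at h
  refine h.congr_fun fun k => ?_
  push_cast
  ring
end

section
/- The series of H(k)/k^4 over positive integers k converges to 3ζ(5) − ζ(2)ζ(3). -/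
open scoped BigOperators

set_option maxHeartbeats 1000000

namespace EulerSum3Aux

lemma H_succ (k : ℕ) : H (k + 1) = H k + 1 / ((k : ℝ) + 1) := by
  rw [H, H, Finset.sum_Icc_succ_top (by omega)]
  push_cast
  ring

lemma H_eq_range (k : ℕ) : H k = ∑ j ∈ Finset.range k, (1 : ℝ) / ((j : ℝ) + 1) := by
  induction k with
  | zero => simp [H]
  | succ k ih => rw [H_succ, ih, Finset.sum_range_succ]

lemma summ1 (p : ℕ) (hp : 1 < p) : Summable (fun n : ℕ => (1:ℝ)/((n:ℝ)+1)^p) := by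
  have := Real.summable_one_div_nat_pow.mpr hp
  have h := (summable_nat_add_iff 1).mpr this
  simpa using h

noncomputable def z (p : ℕ) : ℝ := ∑' n : ℕ, (1:ℝ)/((n:ℝ)+1)^p

lemma hz (p : ℕ) (hp : 1 < p) : HasSum (fun n : ℕ => (1:ℝ)/((n:ℝ)+1)^p) (z p) :=
  (summ1 p hp).hasSum

/-- generic summability criterion for double sums -/
lemma summable_of_le_prod {f : ℕ × ℕ → ℝ} (a b : ℕ) (ha : 1 < a) (hb : 1 < b)
    (h0 : ∀ x, 0 ≤ f x)
    (hle : ∀ x : ℕ × ℕ, f x ≤ 1/(((x.1:ℝ)+1)^a * ((x.2:ℝ)+1)^b)) : Summable f := by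
  have hna : (0:(ℕ → ℝ)) ≤ (fun n : ℕ => (1:ℝ)/((n:ℝ)+1)^a) := fun n => by positivity
  have hnb : (0:(ℕ → ℝ)) ≤ (fun n : ℕ => (1:ℝ)/((n:ℝ)+1)^b) := fun n => by positivity
  have hprod : Summable (fun x : ℕ × ℕ => (1/((x.1:ℝ)+1)^a) * (1/((x.2:ℝ)+1)^b)) :=
    Summable.mul_of_nonneg (summ1 a ha) (summ1 b hb) hna hnb
  refine Summable.of_nonneg_of_le h0 (fun x => ?_) hprod
  calc f x ≤ 1/(((x.1:ℝ)+1)^a * ((x.2:ℝ)+1)^b) := hle x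
    _ = (1/((x.1:ℝ)+1)^a) * (1/((x.2:ℝ)+1)^b) := by ring

/-- `K p q (m, n) = 1/((n+1)^p (m+n+2)^q)`, i.e. the sum over pairs `u < v` of
`1/(u^p v^q)` with `u = n+1`, `v = m+n+2`. -/
noncomputable def K (p q : ℕ) (x : ℕ × ℕ) : ℝ :=
  1/(((x.2:ℝ)+1)^p * ((x.1:ℝ)+(x.2:ℝ)+2)^q)

lemma summable_K (p q : ℕ) (hq : 2 ≤ q) (hpq : 4 ≤ p + q) : Summable (K p q) := by
  refine summable_of_le_prod 2 (p + q - 2) (by norm_num) (by omega)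
    (fun x => by unfold K; positivity) (fun x => ?_)
  obtain ⟨m, n⟩ := x
  rw [K]
  apply one_div_le_one_div_of_le (by positivity)
  have hsplit : ((m:ℝ)+(n:ℝ)+2)^q = ((m:ℝ)+(n:ℝ)+2)^2 * ((m:ℝ)+(n:ℝ)+2)^(q-2) := by
    rw [← pow_add]; congr 1; omega
  have hps : ((n:ℝ)+1)^(p+q-2) = ((n:ℝ)+1)^p * ((n:ℝ)+1)^(q-2) := by
    rw [← pow_add]; congr 1; omega
  have hm : (0:ℝ) ≤ (m:ℝ) := Nat.cast_nonneg m
  have hn : (0:ℝ) ≤ (n:ℝ) := Nat.cast_nonneg n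
  calc ((m:ℝ)+1)^2 * ((n:ℝ)+1)^(p+q-2)
      = ((m:ℝ)+1)^2 * (((n:ℝ)+1)^p * ((n:ℝ)+1)^(q-2)) := by rw [hps]
    _ ≤ ((m:ℝ)+(n:ℝ)+2)^2 * (((n:ℝ)+1)^p * ((m:ℝ)+(n:ℝ)+2)^(q-2)) := by
        gcongr <;> linarith
    _ = ((n:ℝ)+1)^p * (((m:ℝ)+(n:ℝ)+2)^2 * ((m:ℝ)+(n:ℝ)+2)^(q-2)) := by ring
    _ = ((n:ℝ)+1)^p * ((m:ℝ)+(n:ℝ)+2)^q := by rw [← hsplit]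

noncomputable def tK (p q : ℕ) : ℝ := ∑' x, K p q x

lemma hK (p q : ℕ) (hq : 2 ≤ q) (hpq : 4 ≤ p + q) : HasSum (K p q) (tK p q) :=
  (summable_K p q hq hpq).hasSum

/-- The symmetric double sum `A (m,n) = 1/((m+1)(n+1)(m+n+2)^3)`. -/
noncomputable def A (x : ℕ × ℕ) : ℝ :=
  1/(((x.1:ℝ)+1) * ((x.2:ℝ)+1) * ((x.1:ℝ)+(x.2:ℝ)+2)^3)

lemma summable_A : Summable A := by
  refine summable_of_le_prod 2 2 (by norm_num) (by norm_num)
    (fun x => by unfold A; positivity) (fun x => ?_)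
  obtain ⟨m, n⟩ := x
  rw [A]
  apply one_div_le_one_div_of_le (by positivity)
  have hm : (0:ℝ) ≤ (m:ℝ) := Nat.cast_nonneg m
  have hn : (0:ℝ) ≤ (n:ℝ) := Nat.cast_nonneg n
  have h1 : ((m:ℝ)+1)*((n:ℝ)+1) ≤ ((m:ℝ)+(n:ℝ)+2)^2 := by nlinarith
  have h2 : ((m:ℝ)+(n:ℝ)+2)^2 ≤ ((m:ℝ)+(n:ℝ)+2)^3 := by nlinarith
  calc ((m:ℝ)+1)^2*((n:ℝ)+1)^2 = (((m:ℝ)+1)*((n:ℝ)+1))*(((m:ℝ)+1)*((n:ℝ)+1)) := by ring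
    _ ≤ (((m:ℝ)+1)*((n:ℝ)+1))*(((m:ℝ)+(n:ℝ)+2)^2) := by
        have := mul_le_mul_of_nonneg_left h1 (by positivity : (0:ℝ) ≤ ((m:ℝ)+1)*((n:ℝ)+1))
        linarith
    _ ≤ (((m:ℝ)+1)*((n:ℝ)+1))*(((m:ℝ)+(n:ℝ)+2)^3) := by
        have := mul_le_mul_of_nonneg_left h2 (by positivity : (0:ℝ) ≤ ((m:ℝ)+1)*((n:ℝ)+1))
        linarith

noncomputable def tA : ℝ := ∑' x, A x

lemma hA : HasSum A tA := summable_A.hasSum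

lemma tele_sum (c : ℝ) (N : ℕ) :
    ∑ j ∈ Finset.range N, (1/(c+(j:ℝ)+1) - 1/(c+(j:ℝ)+2)) = 1/(c+1) - 1/(c+(N:ℝ)+1) := by
  induction N with
  | zero => simp
  | succ N ih =>
    rw [Finset.sum_range_succ, ih]
    push_cast
    ring

lemma telescope (n : ℕ) :
    HasSum (fun m : ℕ => 1/((m:ℝ)+1) - 1/((m:ℝ)+(n:ℝ)+2)) (H (n+1)) := by
  have hterm : ∀ m : ℕ, 1/((m:ℝ)+1) - 1/((m:ℝ)+(n:ℝ)+2)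
      = ((n:ℝ)+1)/(((m:ℝ)+1)*((m:ℝ)+(n:ℝ)+2)) := by
    intro m
    have h1 : ((m:ℝ)+1) ≠ 0 := by positivity
    have h2 : ((m:ℝ)+(n:ℝ)+2) ≠ 0 := by positivity
    field_simp
    ring
  have hsum : Summable (fun m : ℕ => 1/((m:ℝ)+1) - 1/((m:ℝ)+(n:ℝ)+2)) := by
    refine Summable.of_nonneg_of_le (fun m => ?_) (fun m => ?_)
      ((summ1 2 one_lt_two).mul_left ((n:ℝ)+1))
    · rw [hterm m]; positivity
    · rw [hterm m]
      have hn : (0:ℝ) ≤ (n:ℝ) := Nat.cast_nonneg n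
      calc ((n:ℝ)+1)/(((m:ℝ)+1)*((m:ℝ)+(n:ℝ)+2))
          ≤ ((n:ℝ)+1)/(((m:ℝ)+1)*((m:ℝ)+1)) := by
            apply div_le_div_of_nonneg_left (by linarith) (by positivity)
            have : (0:ℝ) < (m:ℝ)+1 := by positivity
            nlinarith
        _ = ((n:ℝ)+1) * (1/((m:ℝ)+1)^2) := by ring
  rw [hsum.hasSum_iff_tendsto_nat]
  have key : ∀ M : ℕ, ∑ m ∈ Finset.range M, (1/((m:ℝ)+1) - 1/((m:ℝ)+(n:ℝ)+2))
      = H (n+1) - ∑ j ∈ Finset.range (n+1), 1/((M:ℝ)+(j:ℝ)+1) := by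
    intro M
    induction M with
    | zero =>
      rw [H_eq_range]
      simp
    | succ M ih =>
      rw [Finset.sum_range_succ, ih]
      have htele := tele_sum (M:ℝ) (n+1)
      rw [Finset.sum_sub_distrib] at htele
      have hcongr : ∑ j ∈ Finset.range (n+1), 1/(((M+1:ℕ):ℝ)+(j:ℝ)+1)
          = ∑ j ∈ Finset.range (n+1), 1/((M:ℝ)+(j:ℝ)+2) := by
        apply Finset.sum_congr rfl
        intro j _
        push_cast
        ring_nf
      push_cast at hcongr ⊢
      rw [hcongr]
      push_cast at htele
      rw [show (M:ℝ) + ((n:ℝ) + 1) + 1 = (M:ℝ) + (n:ℝ) + 2 by ring] at htele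
      linarith
  have hlim : Filter.Tendsto
      (fun M : ℕ => H (n+1) - ∑ j ∈ Finset.range (n+1), 1/((M:ℝ)+(j:ℝ)+1))
      Filter.atTop (nhds (H (n+1))) := by
    have h0 : Filter.Tendsto
        (fun M : ℕ => ∑ j ∈ Finset.range (n+1), 1/((M:ℝ)+(j:ℝ)+1))
        Filter.atTop (nhds 0) := by
      have : Filter.Tendsto
          (fun M : ℕ => ∑ j ∈ Finset.range (n+1), 1/((M:ℝ)+(j:ℝ)+1))
          Filter.atTop (nhds (∑ j ∈ Finset.range (n+1), (0:ℝ))) := by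
        apply tendsto_finset_sum
        intro j _
        apply squeeze_zero (fun M => by positivity)
          (g := fun M : ℕ => 1/((M:ℝ)+1)) (fun M => ?_)
          tendsto_one_div_add_atTop_nhds_zero_nat
        apply one_div_le_one_div_of_le (by positivity)
        have : (0:ℝ) ≤ (j:ℝ) := Nat.cast_nonneg j
        linarith
      simpa using this
    have := Filter.Tendsto.sub (tendsto_const_nhds (x := H (n+1))) h0
    simpa using this
  exact Filter.Tendsto.congr (fun M => (key M).symm) hlim

/-- `D (n, m) = 1/((m+1)(n+1)^4) - 1/((n+1)^4 (m+n+2))`. -/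
noncomputable def D (x : ℕ × ℕ) : ℝ :=
  1/(((x.2:ℝ)+1)*((x.1:ℝ)+1)^4) - 1/(((x.1:ℝ)+1)^4*((x.2:ℝ)+(x.1:ℝ)+2))

lemma D_eq (n m : ℕ) :
    D (n, m) = 1/(((n:ℝ)+1)^3*(((m:ℝ)+1)*((m:ℝ)+(n:ℝ)+2))) := by
  unfold D
  have h1 : ((m:ℝ)+1) ≠ 0 := by positivity
  have h2 : ((n:ℝ)+1) ≠ 0 := by positivity
  have h3 : ((m:ℝ)+(n:ℝ)+2) ≠ 0 := by positivity
  field_simp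
  ring

lemma summable_D : Summable D := by
  refine summable_of_le_prod 3 2 (by norm_num) (by norm_num) (fun x => ?_) (fun x => ?_)
  · obtain ⟨n, m⟩ := x
    rw [D_eq]
    positivity
  · obtain ⟨n, m⟩ := x
    rw [D_eq]
    apply one_div_le_one_div_of_le (by positivity)
    have hn : (0:ℝ) ≤ (n:ℝ) := Nat.cast_nonneg n
    have hm : (0:ℝ) ≤ (m:ℝ) := Nat.cast_nonneg m
    have : ((m:ℝ)+1)^2 ≤ ((m:ℝ)+1)*((m:ℝ)+(n:ℝ)+2) := by nlinarith
    calc ((n:ℝ)+1)^3 * ((m:ℝ)+1)^2 ≤ ((n:ℝ)+1)^3 * (((m:ℝ)+1)*((m:ℝ)+(n:ℝ)+2)) := by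
          apply mul_le_mul_of_nonneg_left this (by positivity)
      _ = ((n:ℝ)+1)^3 * (((m:ℝ)+1)*((m:ℝ)+(n:ℝ)+2)) := rfl

noncomputable def tD : ℝ := ∑' x, D x

lemma hD : HasSum D tD := summable_D.hasSum

lemma fiber_D (n : ℕ) : HasSum (fun m : ℕ => D (n, m)) (H (n+1) / ((n:ℝ)+1)^4) := by
  have h := (telescope n).mul_left (1/(((n:ℝ)+1)^4))
  have hfun : (fun m : ℕ => (1/(((n:ℝ)+1)^4)) * (1/((m:ℝ)+1) - 1/((m:ℝ)+(n:ℝ)+2)))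
      = fun m => D (n, m) := by
    funext m
    unfold D
    simp only
    have h1 : ((m:ℝ)+1) ≠ 0 := by positivity
    have h2 : ((n:ℝ)+1) ≠ 0 := by positivity
    have h3 : ((m:ℝ)+(n:ℝ)+2) ≠ 0 := by positivity
    field_simp
  rw [hfun] at h
  have hval : (1/(((n:ℝ)+1)^4)) * H (n+1) = H (n+1) / ((n:ℝ)+1)^4 := by ring
  rw [hval] at h
  exact h

lemma hS : HasSum (fun n : ℕ => H (n+1) / ((n:ℝ)+1)^4) tD :=
  hD.prod_fiberwise fiber_D

lemma eq_delta : tD = tA + tK 3 2 + tK 2 3 := by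
  have hDswap : HasSum (fun x : ℕ × ℕ => D (x.2, x.1)) tD :=
    (Equiv.prodComm ℕ ℕ).hasSum_iff.mpr hD
  have hfe : (fun x : ℕ × ℕ => D (x.2, x.1)) = fun x => A x + K 3 2 x + K 2 3 x := by
    funext x
    obtain ⟨m, n⟩ := x
    rw [D_eq]
    unfold A K
    simp only
    have h1 : ((m:ℝ)+1) ≠ 0 := by positivity
    have h2 : ((n:ℝ)+1) ≠ 0 := by positivity
    have h3 : ((m:ℝ)+(n:ℝ)+2) ≠ 0 := by positivity
    field_simp
    ring
  rw [hfe] at hDswap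
  exact hDswap.unique
    ((hA.add (hK 3 2 (by norm_num) (by norm_num))).add (hK 2 3 (by norm_num) (by norm_num)))

lemma eq_beta : tA = tK 1 4 + tK 1 4 := by
  have hK14swap : HasSum (fun x : ℕ × ℕ => K 1 4 (x.2, x.1)) (tK 1 4) :=
    (Equiv.prodComm ℕ ℕ).hasSum_iff.mpr (hK 1 4 (by norm_num) (by norm_num))
  have hsum : HasSum (fun x : ℕ × ℕ => K 1 4 x + K 1 4 (x.2, x.1)) (tK 1 4 + tK 1 4) :=
    (hK 1 4 (by norm_num) (by norm_num)).add hK14swap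
  have hfe : A = fun x : ℕ × ℕ => K 1 4 x + K 1 4 (x.2, x.1) := by
    funext x
    obtain ⟨m, n⟩ := x
    unfold A K
    simp only
    have h1 : ((m:ℝ)+1) ≠ 0 := by positivity
    have h2 : ((n:ℝ)+1) ≠ 0 := by positivity
    have h3 : ((m:ℝ)+(n:ℝ)+2) ≠ 0 := by positivity
    field_simp
    ring
  have h := hA
  rw [hfe] at h
  exact h.unique hsum

noncomputable def F (x : ℕ × ℕ) : ℝ := (1/((x.1:ℝ)+1)^2) * (1/((x.2:ℝ)+1)^3)

lemma hF : HasSum F (z 2 * z 3) := by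
  have hna : (0:(ℕ → ℝ)) ≤ (fun n : ℕ => (1:ℝ)/((n:ℝ)+1)^2) := fun n => by positivity
  have hnb : (0:(ℕ → ℝ)) ≤ (fun n : ℕ => (1:ℝ)/((n:ℝ)+1)^3) := fun n => by positivity
  exact (hz 2 one_lt_two).mul (hz 3 (by norm_num))
    (Summable.mul_of_nonneg (summ1 2 one_lt_two) (summ1 3 (by norm_num)) hna hnb)

lemma hF1 : HasSum (Set.indicator {x : ℕ × ℕ | x.1 < x.2} F) (tK 2 3) := by
  have hv : Function.Injective (fun y : ℕ × ℕ => (y.2, y.2 + y.1 + 1)) := by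
    intro a b h
    simp only [Prod.mk.injEq] at h
    exact Prod.ext_iff.mpr ⟨by omega, h.1⟩
  have h0 : ∀ x ∉ Set.range (fun y : ℕ × ℕ => (y.2, y.2 + y.1 + 1)),
      Set.indicator {x : ℕ × ℕ | x.1 < x.2} F x = 0 := by
    intro x hx
    apply Set.indicator_of_notMem
    intro hlt
    simp only [Set.mem_setOf_eq] at hlt
    exact hx ⟨(x.2 - x.1 - 1, x.1), Prod.ext_iff.mpr ⟨rfl, by simp only; omega⟩⟩
  have hcomp : (Set.indicator {x : ℕ × ℕ | x.1 < x.2} F)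
      ∘ (fun y : ℕ × ℕ => (y.2, y.2 + y.1 + 1)) = K 2 3 := by
    funext y
    obtain ⟨m, n⟩ := y
    simp only [Function.comp_apply]
    rw [Set.indicator_of_mem (by simp only [Set.mem_setOf_eq]; omega)]
    unfold F K
    simp only
    push_cast
    rw [div_mul_div_comm, one_mul]
    ring_nf
  have h := hK 2 3 (by norm_num) (by norm_num)
  rw [← hcomp] at h
  exact (hv.hasSum_iff h0).mp h

lemma hF2 : HasSum (Set.indicator {x : ℕ × ℕ | x.1 = x.2} F) (z 5) := by
  have hv : Function.Injective (fun k : ℕ => ((k, k) : ℕ × ℕ)) := by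
    intro a b h
    exact (Prod.ext_iff.mp h).1
  have h0 : ∀ x ∉ Set.range (fun k : ℕ => ((k, k) : ℕ × ℕ)),
      Set.indicator {x : ℕ × ℕ | x.1 = x.2} F x = 0 := by
    intro x hx
    apply Set.indicator_of_notMem
    intro heq
    simp only [Set.mem_setOf_eq] at heq
    exact hx ⟨x.1, Prod.ext_iff.mpr ⟨rfl, heq⟩⟩
  have hcomp : (Set.indicator {x : ℕ × ℕ | x.1 = x.2} F)
      ∘ (fun k : ℕ => ((k, k) : ℕ × ℕ)) = fun k : ℕ => (1:ℝ)/((k:ℝ)+1)^5 := by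
    funext k
    simp only [Function.comp_apply]
    rw [Set.indicator_of_mem (by simp only [Set.mem_setOf_eq])]
    unfold F
    simp only
    rw [div_mul_div_comm, one_mul, ← pow_add]
  have h := hz 5 (by norm_num)
  rw [← hcomp] at h
  exact (hv.hasSum_iff h0).mp h

lemma hF3 : HasSum (Set.indicator {x : ℕ × ℕ | x.2 < x.1} F) (tK 3 2) := by
  have hv : Function.Injective (fun y : ℕ × ℕ => (y.2 + y.1 + 1, y.2)) := by
    intro a b h
    simp only [Prod.mk.injEq] at h
    exact Prod.ext_iff.mpr ⟨by omega, h.2⟩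
  have h0 : ∀ x ∉ Set.range (fun y : ℕ × ℕ => (y.2 + y.1 + 1, y.2)),
      Set.indicator {x : ℕ × ℕ | x.2 < x.1} F x = 0 := by
    intro x hx
    apply Set.indicator_of_notMem
    intro hlt
    simp only [Set.mem_setOf_eq] at hlt
    exact hx ⟨(x.1 - x.2 - 1, x.2), Prod.ext_iff.mpr ⟨by simp only; omega, rfl⟩⟩
  have hcomp : (Set.indicator {x : ℕ × ℕ | x.2 < x.1} F)
      ∘ (fun y : ℕ × ℕ => (y.2 + y.1 + 1, y.2)) = K 3 2 := by
    funext y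
    obtain ⟨m, n⟩ := y
    simp only [Function.comp_apply]
    rw [Set.indicator_of_mem (by simp only [Set.mem_setOf_eq]; omega)]
    unfold F K
    simp only
    push_cast
    rw [div_mul_div_comm, one_mul]
    ring_nf
  have h := hK 3 2 (by norm_num) (by norm_num)
  rw [← hcomp] at h
  exact (hv.hasSum_iff h0).mp h

lemma eq_stuffle : z 2 * z 3 = tK 2 3 + z 5 + tK 3 2 := by
  have hsplit : F = fun x => Set.indicator {x : ℕ × ℕ | x.1 < x.2} F x
      + Set.indicator {x : ℕ × ℕ | x.1 = x.2} F x
      + Set.indicator {x : ℕ × ℕ | x.2 < x.1} F x := by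
    funext x
    rcases lt_trichotomy x.1 x.2 with h | h | h
    · rw [Set.indicator_of_mem (by simpa using h),
        Set.indicator_of_notMem (by simp only [Set.mem_setOf_eq]; omega),
        Set.indicator_of_notMem (by simp only [Set.mem_setOf_eq]; omega)]
      ring
    · rw [Set.indicator_of_notMem (by simp only [Set.mem_setOf_eq]; omega),
        Set.indicator_of_mem (by simpa using h),
        Set.indicator_of_notMem (by simp only [Set.mem_setOf_eq]; omega)]
      ring
    · rw [Set.indicator_of_notMem (by simp only [Set.mem_setOf_eq]; omega),
        Set.indicator_of_notMem (by simp only [Set.mem_setOf_eq]; omega),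
        Set.indicator_of_mem (by simpa using h)]
      ring
  have h := hF
  rw [hsplit] at h
  exact h.unique ((hF1.add hF2).add hF3)

lemma sum_reflect_H (k : ℕ) :
    ∑ i ∈ Finset.range (k+1), 1/((k:ℝ)-(i:ℝ)+1) = H (k+1) := by
  have h1 : ∑ i ∈ Finset.range (k+1), 1/((k:ℝ)-(i:ℝ)+1)
      = ∑ i ∈ Finset.range (k+1), 1/(((k-i:ℕ):ℝ)+1) := by
    apply Finset.sum_congr rfl
    intro i hi
    have hik : i ≤ k := by
      simp only [Finset.mem_range] at hi
      omega
    rw [Nat.cast_sub hik]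
  have h2 := Finset.sum_range_reflect (fun j => 1/((j:ℝ)+1)) (k+1)
  simp only [Nat.add_sub_cancel] at h2
  rw [h1, h2, ← H_eq_range]

lemma hT : HasSum (fun k : ℕ => H (k+1) / ((k:ℝ)+2)^4) (tK 1 4) := by
  have h14 := hK 1 4 (by norm_num) (by norm_num)
  have he : HasSum (fun x : (Σ k : ℕ, Finset.HasAntidiagonal.antidiagonal k) =>
      K 1 4 (Finset.HasAntidiagonal.sigmaAntidiagonalEquivProd x)) (tK 1 4) :=
    (Equiv.hasSum_iff _).mpr h14
  refine he.sigma (fun k => ?_)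
  have hfin := hasSum_fintype
    (fun c : (Finset.HasAntidiagonal.antidiagonal k : Finset (ℕ × ℕ)) => K 1 4 (c : ℕ × ℕ))
  have hval : (∑ c : (Finset.HasAntidiagonal.antidiagonal k : Finset (ℕ × ℕ)), K 1 4 (c : ℕ × ℕ))
      = H (k+1) / ((k:ℝ)+2)^4 := by
    rw [Finset.sum_coe_sort (Finset.HasAntidiagonal.antidiagonal k) (K 1 4)]
    rw [Finset.Nat.sum_antidiagonal_eq_sum_range_succ_mk]
    have hterm : ∀ i ∈ Finset.range (k+1),
        K 1 4 (i, k - i) = (1/((k:ℝ)+2)^4) * (1/((k:ℝ)-(i:ℝ)+1)) := by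
      intro i hi
      have hik : i ≤ k := by
        simp only [Finset.mem_range] at hi
        omega
      unfold K
      simp only
      rw [Nat.cast_sub hik, pow_one]
      rw [show (i:ℝ)+((k:ℝ)-(i:ℝ))+2 = (k:ℝ)+2 by ring]
      rw [one_div_mul_one_div, mul_comm]
    rw [Finset.sum_congr rfl hterm, ← Finset.mul_sum, sum_reflect_H]
    ring
  rw [← hval]
  exact hfin

lemma eq_epsilon : tD = z 5 + tK 1 4 := by
  have h1 : HasSum (fun k : ℕ => H ((k+1)+1) / (((k+1:ℕ):ℝ)+1)^4) (tD - 1) := by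
    apply (hasSum_nat_add_iff (f := fun n : ℕ => H (n+1)/((n:ℝ)+1)^4) 1).mpr
    have hH1 : H 1 = 1 := by simp [H]
    have : tD - 1 + ∑ i ∈ Finset.range 1, H (i+1) / ((i:ℝ)+1)^4 = tD := by
      simp [hH1]
    rw [this]
    exact hS
  have h5 : HasSum (fun k : ℕ => (1:ℝ)/(((k+1:ℕ):ℝ)+1)^5) (z 5 - 1) := by
    apply (hasSum_nat_add_iff (f := fun n : ℕ => (1:ℝ)/((n:ℝ)+1)^5) 1).mpr
    have : z 5 - 1 + ∑ i ∈ Finset.range 1, (1:ℝ)/((i:ℝ)+1)^5 = z 5 := by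
      simp
    rw [this]
    exact hz 5 (by norm_num)
  have hsum : HasSum (fun k : ℕ => H (k+1) / ((k:ℝ)+2)^4 + (1:ℝ)/(((k+1:ℕ):ℝ)+1)^5)
      (tK 1 4 + (z 5 - 1)) := hT.add h5
  have hfe : (fun k : ℕ => H ((k+1)+1) / (((k+1:ℕ):ℝ)+1)^4)
      = fun k : ℕ => H (k+1) / ((k:ℝ)+2)^4 + (1:ℝ)/(((k+1:ℕ):ℝ)+1)^5 := by
    funext k
    rw [H_succ (k+1)]
    push_cast
    have h2 : ((k:ℝ)+2) ≠ 0 := by positivity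
    field_simp
    ring
  rw [hfe] at h1
  have := h1.unique hsum
  linarith

lemma final_real : HasSum (fun k : ℕ => H (k+1) / ((k:ℝ)+1)^4) (3 * z 5 - z 2 * z 3) := by
  have e1 := eq_delta
  have e2 := eq_beta
  have e3 := eq_stuffle
  have e4 := eq_epsilon
  have : tD = 3 * z 5 - z 2 * z 3 := by linarith
  rw [← this]
  exact hS

lemma zeta_nat (p : ℕ) (hp : 1 < p) : riemannZeta (p : ℂ) = ((z p : ℝ) : ℂ) := by
  rw [zeta_eq_tsum_one_div_nat_add_one_cpow (by simp; exact_mod_cast hp)]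
  have hC : HasSum (fun n : ℕ => 1/((n:ℂ)+1)^(p:ℂ)) ((z p : ℝ) : ℂ) := by
    have h := (hz p hp).map Complex.ofRealHom Complex.continuous_ofReal
    have hfe : (fun n : ℕ => Complex.ofRealHom ((1:ℝ)/((n:ℝ)+1)^p))
        = fun n : ℕ => 1/((n:ℂ)+1)^(p:ℂ) := by
      funext n
      rw [Complex.cpow_natCast]
      push_cast
      norm_num
    rw [← hfe]
    exact h
  exact hC.tsum_eq

end EulerSum3Aux

theorem euler_sum_3 :
    HasSum (fun k : ℕ => (H (k+1) : ℂ) / ((k : ℂ) + 1) ^ 4) (3 * riemannZeta 5 - riemannZeta 2 * riemannZeta 3) := by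
  have h := EulerSum3Aux.final_real.map Complex.ofRealHom Complex.continuous_ofReal
  have hfe : (fun k : ℕ => Complex.ofRealHom (H (k+1) / ((k:ℝ)+1)^4))
      = fun k : ℕ => (H (k+1) : ℂ) / ((k : ℂ) + 1) ^ 4 := by
    funext k
    push_cast
    norm_num
  have h' : HasSum (fun k : ℕ => (H (k+1) : ℂ) / ((k : ℂ) + 1) ^ 4)
      (((3 * EulerSum3Aux.z 5 - EulerSum3Aux.z 2 * EulerSum3Aux.z 3 : ℝ)) : ℂ) := by
    rw [← hfe]
    exact h
  have h2 : riemannZeta 2 = ((EulerSum3Aux.z 2 : ℝ) : ℂ) := by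
    rw [show (2:ℂ) = ((2:ℕ):ℂ) by norm_num]
    exact EulerSum3Aux.zeta_nat 2 (by norm_num)
  have h3 : riemannZeta 3 = ((EulerSum3Aux.z 3 : ℝ) : ℂ) := by
    rw [show (3:ℂ) = ((3:ℕ):ℂ) by norm_num]
    exact EulerSum3Aux.zeta_nat 3 (by norm_num)
  have h5 : riemannZeta 5 = ((EulerSum3Aux.z 5 : ℝ) : ℂ) := by
    rw [show (5:ℂ) = ((5:ℕ):ℂ) by norm_num]
    exact EulerSum3Aux.zeta_nat 5 (by norm_num)
  rw [h2, h3, h5]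
  convert h' using 1
  push_cast
  ring
end

section
/- The series of H(k)/(k+1)^3 over positive integers k converges to (1/4)ζ(4). -/
open scoped BigOperators

open Real

namespace EulerSum10

noncomputable def z (n : ℕ) : ℝ := 1 / ((n : ℝ) + 1) ^ 2

noncomputable def P (p : ℕ × ℕ) : ℝ := z p.1 * z p.2

noncomputable def b (p : ℕ × ℕ) : ℝ :=
  1 / (((p.1 : ℝ) + 1) ^ 2 * ((p.1 : ℝ) + (p.2 : ℝ) + 2) ^ 2)

noncomputable def t (p : ℕ × ℕ) : ℝ :=
  1 / (((p.1 : ℝ) + 1) * ((p.1 : ℝ) + (p.2 : ℝ) + 2) ^ 3)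

lemma hz : HasSum z (π ^ 2 / 6) := by
  have h0 : HasSum (fun n : ℕ => (1 : ℝ) / (n : ℝ) ^ 2) (π ^ 2 / 6) := hasSum_zeta_two
  have := (hasSum_nat_add_iff (f := fun n : ℕ => (1 : ℝ) / (n : ℝ) ^ 2) 1).mpr (by simpa using h0)
  refine this.congr_fun fun n => ?_
  simp [z]

lemma hz4 : HasSum (fun n : ℕ => 1 / ((n : ℝ) + 1) ^ 4) (π ^ 4 / 90) := by
  have h0 : HasSum (fun n : ℕ => (1 : ℝ) / (n : ℝ) ^ 4) (π ^ 4 / 90) := hasSum_zeta_four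
  have := (hasSum_nat_add_iff (f := fun n : ℕ => (1 : ℝ) / (n : ℝ) ^ 4) 1).mpr (by simpa using h0)
  refine this.congr_fun fun n => ?_
  push_cast
  ring_nf

lemma hP : HasSum P (π ^ 2 / 6 * (π ^ 2 / 6)) :=
  hz.mul hz (hz.summable.mul_of_nonneg hz.summable
    (fun n => by unfold z; positivity) (fun n => by unfold z; positivity))

lemma P_eq (p : ℕ × ℕ) : P p = 1 / (((p.1 : ℝ) + 1) ^ 2 * ((p.2 : ℝ) + 1) ^ 2) := by
  unfold P z
  rw [div_mul_div_comm, one_mul]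

lemma b_le (p : ℕ × ℕ) : b p ≤ P p := by
  rw [P_eq, b]
  apply one_div_le_one_div_of_le
  · positivity
  · have h1 : ((p.2 : ℝ) + 1) ^ 2 ≤ ((p.1 : ℝ) + (p.2 : ℝ) + 2) ^ 2 := by
      have : (0:ℝ) ≤ (p.2 : ℝ) + 1 := by positivity
      nlinarith [Nat.cast_nonneg (α := ℝ) p.1]
    nlinarith [sq_nonneg ((p.1 : ℝ) + 1)]

lemma t_le (p : ℕ × ℕ) : t p ≤ P p := by
  rw [P_eq, t]
  apply one_div_le_one_div_of_le
  · positivity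
  · set x : ℝ := (p.1 : ℝ) + 1
    set y : ℝ := (p.2 : ℝ) + 1
    have hx : (1:ℝ) ≤ x := by simp [x]
    have hy : (1:ℝ) ≤ y := by simp [y]
    have hxy : (p.1 : ℝ) + (p.2 : ℝ) + 2 = x + y := by simp [x, y]; ring
    rw [hxy]
    nlinarith [mul_pos (by linarith : (0:ℝ) < x) (by linarith : (0:ℝ) < y)]

lemma hb_summable : Summable b :=
  Summable.of_nonneg_of_le (fun p => by unfold b; positivity) b_le hP.summable

lemma ht_summable : Summable t :=
  Summable.of_nonneg_of_le (fun p => by unfold t; positivity) t_le hP.summable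

noncomputable def B : ℝ := ∑' p, b p
noncomputable def T : ℝ := ∑' p, t p

lemma hB : HasSum b B := hb_summable.hasSum
lemma hT : HasSum t T := ht_summable.hasSum

lemma hB' : HasSum (fun p : ℕ × ℕ => b (p.2, p.1)) B :=
  ((Equiv.prodComm ℕ ℕ).hasSum_iff (f := b)).mpr hB

lemma hT' : HasSum (fun p : ℕ × ℕ => t (p.2, p.1)) T :=
  ((Equiv.prodComm ℕ ℕ).hasSum_iff (f := t)).mpr hT

/-- Partial fraction identity giving the first equation. -/
lemma eq1 : π ^ 2 / 6 * (π ^ 2 / 6) = B + (B + (2 * T + 2 * T)) := by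
  have h : HasSum P (B + (B + (2 * T + 2 * T))) := by
    refine (hB.add (hB'.add ((hT.mul_left 2).add (hT'.mul_left 2)))).congr_fun fun p => ?_
    obtain ⟨i, j⟩ := p
    show P (i, j) = b (i, j) + (b (j, i) + (2 * t (i, j) + 2 * t (j, i)))
    rw [P_eq]
    simp only [b, t]
    have hx : (0:ℝ) < (i : ℝ) + 1 := by positivity
    have hy : (0:ℝ) < (j : ℝ) + 1 := by positivity
    have hxy : (0:ℝ) < (i : ℝ) + (j : ℝ) + 2 := by positivity
    have hyx : (j : ℝ) + (i : ℝ) + 2 = (i : ℝ) + (j : ℝ) + 2 := by ring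
    rw [hyx]
    field_simp
    ring
  exact hP.unique h

def g1 (p : ℕ × ℕ) : ℕ × ℕ := (p.1, p.1 + p.2 + 1)
def g2 (p : ℕ × ℕ) : ℕ × ℕ := (p.1 + p.2 + 1, p.2)
def g3 (n : ℕ) : ℕ × ℕ := (n, n)

lemma g1_inj : Function.Injective g1 := by
  rintro ⟨a, c⟩ ⟨a', c'⟩ h
  simp only [g1, Prod.mk.injEq] at h ⊢
  omega

lemma g2_inj : Function.Injective g2 := by
  rintro ⟨a, c⟩ ⟨a', c'⟩ h
  simp only [g2, Prod.mk.injEq] at h ⊢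
  omega

lemma g3_inj : Function.Injective g3 := by
  intro a a' h
  simpa [g3] using h

lemma mem_range_g1 (p : ℕ × ℕ) : p ∈ Set.range g1 ↔ p.1 < p.2 := by
  constructor
  · rintro ⟨⟨i, j⟩, rfl⟩; simp [g1]
  · intro h; exact ⟨(p.1, p.2 - p.1 - 1), by simp only [g1]; ext <;> simp <;> omega⟩

lemma mem_range_g2 (p : ℕ × ℕ) : p ∈ Set.range g2 ↔ p.2 < p.1 := by
  constructor
  · rintro ⟨⟨i, j⟩, rfl⟩; simp [g2]
  · intro h; exact ⟨(p.1 - p.2 - 1, p.2), by simp only [g2]; ext <;> simp <;> omega⟩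

lemma mem_range_g3 (p : ℕ × ℕ) : p ∈ Set.range g3 ↔ p.1 = p.2 := by
  constructor
  · rintro ⟨i, rfl⟩; simp [g3]
  · intro h; exact ⟨p.1, by ext <;> simp [g3, h]⟩

lemma hI1 : HasSum (Set.indicator (Set.range g1) P) B := by
  refine (g1_inj.hasSum_iff (fun x hx => Set.indicator_of_notMem hx _)).mp ?_
  refine hB.congr_fun fun p => ?_
  have hmem : g1 p ∈ Set.range g1 := ⟨p, rfl⟩
  rw [Function.comp_apply, Set.indicator_of_mem hmem]
  obtain ⟨i, j⟩ := p
  rw [P_eq]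
  simp only [g1, b]
  push_cast
  ring_nf

lemma hI2 : HasSum (Set.indicator (Set.range g2) P) B := by
  refine (g2_inj.hasSum_iff (fun x hx => Set.indicator_of_notMem hx _)).mp ?_
  refine hB'.congr_fun fun p => ?_
  have hmem : g2 p ∈ Set.range g2 := ⟨p, rfl⟩
  rw [Function.comp_apply, Set.indicator_of_mem hmem]
  obtain ⟨i, j⟩ := p
  rw [P_eq]
  simp only [g2, b]
  push_cast
  ring_nf

lemma hI3 : HasSum (Set.indicator (Set.range g3) P) (π ^ 4 / 90) := by
  refine (g3_inj.hasSum_iff (fun x hx => Set.indicator_of_notMem hx _)).mp ?_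
  refine hz4.congr_fun fun n => ?_
  have hmem : g3 n ∈ Set.range g3 := ⟨n, rfl⟩
  rw [Function.comp_apply, Set.indicator_of_mem hmem]
  rw [P_eq]
  simp only [g3]
  ring_nf

/-- Second equation: splitting the square sum along the diagonal. -/
lemma eq2 : π ^ 2 / 6 * (π ^ 2 / 6) = B + (B + π ^ 4 / 90) := by
  have h : HasSum P (B + (B + π ^ 4 / 90)) := by
    refine (hI1.add (hI2.add hI3)).congr_fun fun p => ?_
    rcases lt_trichotomy p.1 p.2 with h | h | h
    · rw [Set.indicator_of_mem ((mem_range_g1 p).mpr h),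
        Set.indicator_of_notMem (by rw [mem_range_g2]; omega),
        Set.indicator_of_notMem (by rw [mem_range_g3]; omega)]
      ring
    · rw [Set.indicator_of_notMem (by rw [mem_range_g1]; omega),
        Set.indicator_of_notMem (by rw [mem_range_g2]; omega),
        Set.indicator_of_mem ((mem_range_g3 p).mpr h)]
      ring
    · rw [Set.indicator_of_notMem (by rw [mem_range_g1]; omega),
        Set.indicator_of_mem ((mem_range_g2 p).mpr h),
        Set.indicator_of_notMem (by rw [mem_range_g3]; omega)]
      ring
  exact hP.unique h

lemma T_val : T = π ^ 4 / 360 := by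
  have h1 := eq1
  have h2 := eq2
  linarith

lemma H_succ_eq (n : ℕ) : H (n + 1) = ∑ k ∈ Finset.range (n + 1), (1 : ℝ) / ((k : ℝ) + 1) := by
  induction n with
  | zero => simp [H]
  | succ m ih =>
      rw [Finset.sum_range_succ, ← ih, H, H,
        Finset.sum_Icc_succ_top (by omega : 1 ≤ m + 1 + 1)]
      push_cast
      ring_nf

lemma fiber (n : ℕ) :
    HasSum (fun c : (Finset.HasAntidiagonal.antidiagonal n : Finset (ℕ × ℕ)) => t c.val)
      (H (n + 1) / ((n : ℝ) + 2) ^ 3) := by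
  have h := hasSum_fintype (fun c : (Finset.HasAntidiagonal.antidiagonal n : Finset (ℕ × ℕ)) => t c.val)
  convert h using 1
  rw [Finset.sum_coe_sort (Finset.HasAntidiagonal.antidiagonal n) t,
    Finset.Nat.sum_antidiagonal_eq_sum_range_succ_mk]
  have hterm : ∀ k ∈ Finset.range (n + 1),
      t (k, n - k) = (1 : ℝ) / ((k : ℝ) + 1) / ((n : ℝ) + 2) ^ 3 := by
    intro k hk
    rw [Finset.mem_range] at hk
    have hkn : (((n - k : ℕ) : ℝ)) = (n : ℝ) - (k : ℝ) := by
      rw [Nat.cast_sub (by omega)]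
    simp only [t, hkn]
    rw [div_div]
    ring_nf
  rw [Finset.sum_congr rfl hterm, ← Finset.sum_div, ← H_succ_eq]

lemma real_result : HasSum (fun n : ℕ => H (n + 1) / ((n : ℝ) + 2) ^ 3) (π ^ 4 / 360) := by
  have hts : HasSum (t ∘ ⇑(Finset.HasAntidiagonal.sigmaAntidiagonalEquivProd (A := ℕ))) T :=
    (Finset.HasAntidiagonal.sigmaAntidiagonalEquivProd (A := ℕ)).hasSum_iff.mpr hT
  have := hts.sigma (fun n => fiber n)
  rwa [T_val] at this

end EulerSum10

theorem euler_sum_10 :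
    HasSum (fun k : ℕ => (H (k+1) : ℂ) / ((k : ℂ) + 2) ^ 3) (riemannZeta 4 / 4) := by
  rw [riemannZeta_four]
  have h := (Complex.hasSum_ofReal (f := fun n : ℕ => H (n + 1) / ((n : ℝ) + 2) ^ 3)
    (x := Real.pi ^ 4 / 360)).mpr EulerSum10.real_result
  convert h using 2 with k
  · push_cast
    ring
  · push_cast
    ring
end

section
/- The series of H(k)^2/(k+2)^2 over positive integers k converges to −3 + 2ζ(3) + (11/4)ζ(4). -/
set_option maxHeartbeats 1000000

open scoped BigOperators

namespace EulerAux

open Finset Filter Real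

lemma H_zero : H 0 = 0 := by simp [H]

lemma H_succ (k : ℕ) : H (k+1) = H k + 1/((k:ℝ)+1) := by
  rw [H, Finset.sum_Icc_succ_top (by omega)]
  push_cast [H]
  ring

lemma Hgen_zero (p : ℕ) : Hgen p 0 = 0 := by simp [Hgen]

lemma Hgen_succ (p k : ℕ) : Hgen p (k+1) = Hgen p k + 1/((k:ℝ)+1)^p := by
  rw [Hgen, Finset.sum_Icc_succ_top (by omega)]
  push_cast [Hgen]
  ring

lemma H_one : H 1 = 1 := by rw [show (1:ℕ) = 0 + 1 from rfl, H_succ, H_zero]; norm_num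

lemma H_nonneg (k : ℕ) : 0 ≤ H k := by
  induction k with
  | zero => simp [H_zero]
  | succ n ih => rw [H_succ]; positivity

lemma Hgen_nonneg (p k : ℕ) : 0 ≤ Hgen p k := by
  induction k with
  | zero => simp [Hgen_zero]
  | succ n ih => rw [Hgen_succ]; positivity

lemma H_range (m : ℕ) : ∑ i ∈ range m, (1:ℝ)/((i:ℝ)+1) = H m := by
  induction m with
  | zero => simp [H_zero]
  | succ n ih => rw [Finset.sum_range_succ, ih, H_succ]

lemma Hgen_range (p m : ℕ) : ∑ i ∈ range m, (1:ℝ)/((i:ℝ)+1)^p = Hgen p m := by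
  induction m with
  | zero => simp [Hgen_zero]
  | succ n ih => rw [Finset.sum_range_succ, ih, Hgen_succ]

lemma Hgen2_le (k : ℕ) : Hgen 2 k ≤ 2 - 2/((k:ℝ)+1) := by
  induction k with
  | zero => simp [Hgen_zero]
  | succ n ih =>
      rw [Hgen_succ]
      have h1 : (0:ℝ) < (n:ℝ) + 1 := by positivity
      have h2 : (0:ℝ) < (n:ℝ) + 2 := by positivity
      have key : 1/((n:ℝ)+1)^2 ≤ 2/((n:ℝ)+1) - 2/((n:ℝ)+2) := by
        rw [div_sub_div _ _ (ne_of_gt h1) (ne_of_gt h2), div_le_div_iff₀ (by positivity) (by positivity)]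
        ring_nf
        nlinarith [sq_nonneg ((n:ℝ)+1)]
      have e2 : ((n:ℝ)+1+1) = (n:ℝ)+2 := by ring
      push_cast
      rw [e2]
      linarith

lemma H_le_rpow (k : ℕ) : H k ≤ 4 * (k:ℝ) ^ ((4:ℝ)⁻¹) := by
  induction k with
  | zero => simp [H_zero]
  | succ n ih =>
      rw [H_succ]
      set a := ((n:ℝ)) ^ ((4:ℝ)⁻¹) with ha
      set b := ((n:ℝ)+1) ^ ((4:ℝ)⁻¹) with hb
      have hn0 : (0:ℝ) ≤ (n:ℝ) := by positivity
      have hn1 : (0:ℝ) < (n:ℝ) + 1 := by positivity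
      have ha0 : 0 ≤ a := Real.rpow_nonneg hn0 _
      have hb1 : 1 ≤ b := Real.one_le_rpow (by linarith) (by norm_num)
      have hab : a ≤ b := Real.rpow_le_rpow hn0 (by linarith) (by norm_num)
      have ha4 : a ^ 4 = (n:ℝ) := by
        rw [ha, ← Real.rpow_natCast (((n:ℝ)) ^ ((4:ℝ)⁻¹)) 4, ← Real.rpow_mul hn0]
        norm_num
      have hb4 : b ^ 4 = (n:ℝ) + 1 := by
        rw [hb, ← Real.rpow_natCast (((n:ℝ)+1) ^ ((4:ℝ)⁻¹)) 4, ← Real.rpow_mul (le_of_lt hn1)]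
        norm_num
      have key : 1/((n:ℝ)+1) ≤ 4 * (b - a) := by
        rw [← hb4, div_le_iff₀ (by positivity)]
        have e1 : (b-a)*(b^3+a*b^2+a^2*b+a^3) = b^4 - a^4 := by ring
        have e2 : b^4 - a^4 = 1 := by rw [ha4, hb4]; ring
        have hba : 0 ≤ b - a := sub_nonneg.2 hab
        have m1 : a*b^2 ≤ b^3 := by nlinarith [sq_nonneg b]
        have m2 : a^2*b ≤ b^3 := by nlinarith [mul_le_mul_of_nonneg_right (mul_self_le_mul_self ha0 hab) (le_trans zero_le_one hb1)]
        have m3 : a^3 ≤ b^3 := by nlinarith [mul_le_mul_of_nonneg_right (mul_self_le_mul_self ha0 hab) ha0]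
        have m4 : b^3 ≤ b^4 := by nlinarith [pow_nonneg (le_trans zero_le_one hb1) 3]
        nlinarith [mul_le_mul_of_nonneg_left m1 hba, mul_le_mul_of_nonneg_left m2 hba,
          mul_le_mul_of_nonneg_left m3 hba, mul_le_mul_of_nonneg_left m4 hba]
      have : ((n:ℝ)+1 : ℝ) = ((n+1 : ℕ) : ℝ) := by push_cast; ring
      rw [← this]
      linarith

/-- summability of `(n+1)^(-3/2)` -/
lemma summable_32 : Summable (fun n : ℕ => ((n:ℝ)+1) ^ (-(3/2) : ℝ)) := by
  have h := Real.summable_nat_rpow (p := -(3/2)).2 (by norm_num)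
  have := (summable_nat_add_iff (f := fun n : ℕ => ((n:ℝ)) ^ (-(3/2) : ℝ)) 1).2 h
  refine this.congr (fun n => ?_)
  push_cast
  ring_nf

lemma sz2 : Summable (fun n : ℕ => 1/((n:ℝ)+1)^2) := by
  have h := (Real.summable_one_div_nat_pow (p := 2)).2 (by norm_num)
  have := (summable_nat_add_iff (f := fun n : ℕ => 1/((n:ℝ))^2) 1).2 h
  refine this.congr (fun n => ?_)
  push_cast
  ring_nf

lemma sz3 : Summable (fun n : ℕ => 1/((n:ℝ)+1)^3) := by
  have h := (Real.summable_one_div_nat_pow (p := 3)).2 (by norm_num)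
  have := (summable_nat_add_iff (f := fun n : ℕ => 1/((n:ℝ))^3) 1).2 h
  refine this.congr (fun n => ?_)
  push_cast
  ring_nf

lemma sz4 : Summable (fun n : ℕ => 1/((n:ℝ)+1)^4) := by
  have h := (Real.summable_one_div_nat_pow (p := 4)).2 (by norm_num)
  have := (summable_nat_add_iff (f := fun n : ℕ => 1/((n:ℝ))^4) 1).2 h
  refine this.congr (fun n => ?_)
  push_cast
  ring_nf

lemma sB : Summable (fun n : ℕ => H (n+1)^2/((n:ℝ)+1)^2) := by
  refine Summable.of_nonneg_of_le (fun n => by positivity) (fun n => ?_) (summable_32.mul_left 16)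
  have h0 : (0:ℝ) < (n:ℝ)+1 := by positivity
  have h1 : H (n+1) ≤ 4 * ((n:ℝ)+1) ^ ((4:ℝ)⁻¹) := by
    have := H_le_rpow (n+1)
    push_cast at this
    exact this
  have hsq : H (n+1)^2 ≤ 16 * ((n:ℝ)+1) ^ ((2:ℝ)⁻¹) := by
    have h2 : H (n+1)^2 ≤ (4 * ((n:ℝ)+1) ^ ((4:ℝ)⁻¹))^2 := by
      have := mul_self_le_mul_self (H_nonneg (n+1)) h1
      nlinarith
    have h3 : (4 * ((n:ℝ)+1) ^ ((4:ℝ)⁻¹))^2 = 16 * (((n:ℝ)+1) ^ ((4:ℝ)⁻¹))^2 := by ring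
    have h4 : (((n:ℝ)+1) ^ ((4:ℝ)⁻¹))^2 = ((n:ℝ)+1) ^ ((2:ℝ)⁻¹) := by
      rw [← Real.rpow_natCast (((n:ℝ)+1) ^ ((4:ℝ)⁻¹)) 2, ← Real.rpow_mul (le_of_lt h0)]
      norm_num
    rw [h3, h4] at h2
    exact h2
  have e : 16 * ((n:ℝ)+1) ^ ((2:ℝ)⁻¹) / ((n:ℝ)+1)^2 = 16 * ((n:ℝ)+1) ^ (-(3/2):ℝ) := by
    rw [mul_div_assoc, ← Real.rpow_natCast ((n:ℝ)+1) 2, ← Real.rpow_sub h0]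
    norm_num
  calc H (n+1)^2/((n:ℝ)+1)^2 ≤ (16 * ((n:ℝ)+1) ^ ((2:ℝ)⁻¹))/((n:ℝ)+1)^2 := by gcongr
  _ = 16 * ((n:ℝ)+1) ^ (-(3/2):ℝ) := e

lemma sA2 : Summable (fun n : ℕ => H (n+1)/((n:ℝ)+1)^2) := by
  refine Summable.of_nonneg_of_le (fun n => div_nonneg (H_nonneg _) (by positivity)) (fun n => ?_) (sB.add sz2)
  have h : H (n+1) ≤ H (n+1)^2 + 1 := by nlinarith [H_nonneg (n+1)]
  calc H (n+1)/((n:ℝ)+1)^2 ≤ (H (n+1)^2 + 1)/((n:ℝ)+1)^2 := by gcongr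
  _ = H (n+1)^2/((n:ℝ)+1)^2 + 1/((n:ℝ)+1)^2 := by rw [add_div]

lemma sA3 : Summable (fun n : ℕ => H (n+1)/((n:ℝ)+1)^3) := by
  refine Summable.of_nonneg_of_le (fun n => div_nonneg (H_nonneg _) (by positivity)) (fun n => ?_) sA2
  gcongr
  all_goals first
    | exact H_nonneg _
    | norm_num
    | linarith [Nat.cast_nonneg (α := ℝ) n]

lemma sZH2 : Summable (fun n : ℕ => Hgen 2 (n+1)/((n:ℝ)+1)^2) := by
  refine Summable.of_nonneg_of_le (fun n => div_nonneg (Hgen_nonneg _ _) (by positivity)) (fun n => ?_) (sz2.mul_left 2)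
  have h := Hgen2_le (n+1)
  have : Hgen 2 (n+1) ≤ 2 := by
    have hp : (0:ℝ) ≤ 2/(((n+1:ℕ):ℝ)+1) := by positivity
    linarith
  calc Hgen 2 (n+1)/((n:ℝ)+1)^2 ≤ 2/((n:ℝ)+1)^2 := by gcongr
  _ = 2 * (1/((n:ℝ)+1)^2) := by ring


/-! ### series constants -/

noncomputable def z2 : ℝ := ∑' n : ℕ, 1/((n:ℝ)+1)^2
noncomputable def z3 : ℝ := ∑' n : ℕ, 1/((n:ℝ)+1)^3
noncomputable def z4 : ℝ := ∑' n : ℕ, 1/((n:ℝ)+1)^4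
noncomputable def A2 : ℝ := ∑' n : ℕ, H (n+1)/((n:ℝ)+1)^2
noncomputable def A3 : ℝ := ∑' n : ℕ, H (n+1)/((n:ℝ)+1)^3
noncomputable def B : ℝ := ∑' n : ℕ, H (n+1)^2/((n:ℝ)+1)^2
noncomputable def ZH2 : ℝ := ∑' n : ℕ, Hgen 2 (n+1)/((n:ℝ)+1)^2

lemma hz2 : HasSum (fun n : ℕ => 1/((n:ℝ)+1)^2) z2 := sz2.hasSum
lemma hz3 : HasSum (fun n : ℕ => 1/((n:ℝ)+1)^3) z3 := sz3.hasSum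
lemma hz4 : HasSum (fun n : ℕ => 1/((n:ℝ)+1)^4) z4 := sz4.hasSum
lemma hA2 : HasSum (fun n : ℕ => H (n+1)/((n:ℝ)+1)^2) A2 := sA2.hasSum
lemma hA3 : HasSum (fun n : ℕ => H (n+1)/((n:ℝ)+1)^3) A3 := sA3.hasSum
lemma hB : HasSum (fun n : ℕ => H (n+1)^2/((n:ℝ)+1)^2) B := sB.hasSum
lemma hZH2 : HasSum (fun n : ℕ => Hgen 2 (n+1)/((n:ℝ)+1)^2) ZH2 := sZH2.hasSum

/-! ### infrastructure -/

lemma hasSum_congr {ι M : Type*} [AddCommMonoid M] [TopologicalSpace M] {f g : ι → M} {S : M}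
    (h : HasSum f S) (hfg : ∀ n, f n = g n) :
    HasSum g S := (funext hfg : f = g) ▸ h

lemma shift1 {f : ℕ → ℝ} {S : ℝ} (hf : HasSum f S) :
    HasSum (fun n => f (n+1)) (S - f 0) := by
  have h := (hasSum_nat_add_iff' (f := f) 1).mpr hf
  simpa using h

lemma hasSum_prod_nn {α β : Type*} {f : α × β → ℝ} (h0 : ∀ p, 0 ≤ f p) {g : α → ℝ}
    (hrow : ∀ a, HasSum (fun b => f (a, b)) (g a)) {S : ℝ} (hg : HasSum g S) : HasSum f S := by
  have hsum : Summable f := by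
    refine (summable_prod_of_nonneg h0).2 ⟨fun a => (hrow a).summable, ?_⟩
    have : (fun a => ∑' b, f (a, b)) = g := funext fun a => (hrow a).tsum_eq
    rw [this]
    exact hg.summable
  obtain ⟨S', hS'⟩ := hsum
  have h2 : HasSum g S' := hS'.prod_fiberwise hrow
  rwa [hg.unique h2]

lemma hasSum_sigma_nn {α : Type*} {fam : α → Type*} {f : (Σ a, fam a) → ℝ} (h0 : ∀ p, 0 ≤ f p)
    {g : α → ℝ} (hfib : ∀ a, HasSum (fun b => f ⟨a, b⟩) (g a)) {S : ℝ} (hg : HasSum g S) :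
    HasSum f S := by
  have hsum : Summable f := by
    refine (summable_sigma_of_nonneg h0).2 ⟨fun a => (hfib a).summable, ?_⟩
    have : (fun a => ∑' b, f ⟨a, b⟩) = g := funext fun a => (hfib a).tsum_eq
    rw [this]
    exact hg.summable
  obtain ⟨S', hS'⟩ := hsum
  have h2 : HasSum g S' := hS'.sigma hfib
  rwa [hg.unique h2]

/-- the equivalence `(Σ n, Fin (n+1)) ≃ ℕ × ℕ`, `⟨n, i⟩ ↦ (i, n-i)`. -/
def eSig : (Σ n : ℕ, Fin (n+1)) ≃ ℕ × ℕ where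
  toFun x := (x.2.1, x.1 - x.2.1)
  invFun p := ⟨p.1 + p.2, ⟨p.1, by omega⟩⟩
  left_inv := by
    rintro ⟨n, ⟨i, hi⟩⟩
    have h : i + (n - i) = n := by omega
    refine Sigma.ext (by simpa using h) ?_
    simp only []
    rw [Fin.heq_ext_iff (by simpa using congrArg Nat.succ h)]
  right_inv := by
    rintro ⟨j, k⟩
    simp

lemma hasSum_antidiag {f : ℕ × ℕ → ℝ} (h0 : ∀ p, 0 ≤ f p) {g : ℕ → ℝ}
    (hfib : ∀ n, ∑ i ∈ range (n+1), f (i, n - i) = g n) {S : ℝ} (hg : HasSum g S) :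
    HasSum f S := by
  rw [← eSig.hasSum_iff]
  refine hasSum_sigma_nn (fun p => h0 _) (fun n => ?_) hg
  have h := hasSum_fintype (fun i : Fin (n+1) => f (i.1, n - i.1))
  rwa [Fin.sum_univ_eq_sum_range (fun i => f (i, n - i)) (n+1), hfib n] at h

lemma hasSum_antidiag_inv {f : ℕ × ℕ → ℝ} {S : ℝ} (hf : HasSum f S) {g : ℕ → ℝ}
    (hfib : ∀ n, ∑ i ∈ range (n+1), f (i, n - i) = g n) : HasSum g S := by
  have h1 : HasSum (f ∘ eSig) S := eSig.hasSum_iff.2 hf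
  refine h1.sigma (fun n => ?_)
  have h := hasSum_fintype (fun i : Fin (n+1) => f (i.1, n - i.1))
  rwa [Fin.sum_univ_eq_sum_range (fun i => f (i, n - i)) (n+1), hfib n] at h

/-! ### telescoping sums -/

lemma FI3 (j : ℕ) : ∑ i ∈ range j, (1:ℝ)/(((i:ℝ)+1)*((i:ℝ)+2)) = 1 - 1/((j:ℝ)+1) := by
  have e : ∀ i : ℕ, (1:ℝ)/(((i:ℝ)+1)*((i:ℝ)+2)) = 1/((i:ℝ)+1) - 1/((i:ℝ)+2) := by
    intro i
    have h1 : ((i:ℝ)+1) ≠ 0 := by positivity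
    have h2 : ((i:ℝ)+2) ≠ 0 := by positivity
    field_simp
    ring
  rw [Finset.sum_congr rfl (fun i _ => e i)]
  have := Finset.sum_range_sub' (fun i : ℕ => 1/((i:ℝ)+1)) j
  convert this using 2 with i
  · push_cast; ring
  · push_cast; ring

lemma t0 : HasSum (fun n : ℕ => 1/(((n:ℝ)+1)*((n:ℝ)+2))) 1 := by
  have hs : Summable (fun n : ℕ => 1/(((n:ℝ)+1)*((n:ℝ)+2))) := by
    refine Summable.of_nonneg_of_le (fun n => by positivity) (fun n => ?_) sz2
    gcongr
    nlinarith [Nat.cast_nonneg (α := ℝ) n]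
  obtain ⟨S, hS⟩ := hs
  have h1 := hS.tendsto_sum_nat
  have h2 : ∀ N : ℕ, ∑ i ∈ range N, 1/(((i:ℝ)+1)*((i:ℝ)+2)) = 1 - 1/((N:ℝ)+1) :=
    fun N => FI3 N
  rw [funext h2] at h1
  have h3 : Filter.Tendsto (fun N : ℕ => 1 - 1/((N:ℝ)+1)) Filter.atTop (nhds 1) := by
    have := tendsto_one_div_add_atTop_nhds_zero_nat (𝕜 := ℝ)
    have h4 := Filter.Tendsto.sub (tendsto_const_nhds (x := (1:ℝ))) this
    simpa using h4
  have : S = 1 := tendsto_nhds_unique h1 h3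
  rwa [this] at hS

lemma ttail (j : ℕ) : HasSum (fun k : ℕ => 1/(((k:ℝ)+(j:ℝ)+1)*((k:ℝ)+(j:ℝ)+2))) (1/((j:ℝ)+1)) := by
  have h := (hasSum_nat_add_iff' (f := fun n : ℕ => 1/(((n:ℝ)+1)*((n:ℝ)+2))) j).mpr t0
  rw [FI3 j] at h
  have h2 : (1:ℝ) - (1 - 1/((j:ℝ)+1)) = 1/((j:ℝ)+1) := by ring
  rw [h2] at h
  exact hasSum_congr h (fun n => by push_cast; ring_nf)

/-- `∑_k 1/((k+1)(k+m+2)) = H(m+1)/(m+1)` -/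
lemma P1 (m : ℕ) : HasSum (fun n : ℕ => 1/(((n:ℝ)+1)*((n:ℝ)+(m:ℝ)+2))) (H (m+1)/((m:ℝ)+1)) := by
  have h := hasSum_sum (s := range (m+1))
    (f := fun (i : ℕ) (n : ℕ) => 1/(((n:ℝ)+(i:ℝ)+1)*((n:ℝ)+(i:ℝ)+2)))
    (a := fun i : ℕ => 1/((i:ℝ)+1)) (fun i _ => ttail i)
  have hval : ∑ i ∈ range (m+1), (1:ℝ)/((i:ℝ)+1) = H (m+1) := H_range (m+1)
  rw [hval] at h
  have hfun : ∀ n : ℕ, ∑ i ∈ range (m+1), 1/(((n:ℝ)+(i:ℝ)+1)*((n:ℝ)+(i:ℝ)+2))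
      = 1/((n:ℝ)+1) - 1/((n:ℝ)+(m:ℝ)+2) := by
    intro n
    have e : ∀ i : ℕ, (1:ℝ)/(((n:ℝ)+(i:ℝ)+1)*((n:ℝ)+(i:ℝ)+2))
        = 1/((n:ℝ)+(i:ℝ)+1) - 1/((n:ℝ)+(i:ℝ)+2) := by
      intro i
      have h1 : ((n:ℝ)+(i:ℝ)+1) ≠ 0 := by positivity
      have h2 : ((n:ℝ)+(i:ℝ)+2) ≠ 0 := by positivity
      field_simp
      ring
    rw [Finset.sum_congr rfl (fun i _ => e i)]
    have := Finset.sum_range_sub' (fun i : ℕ => 1/((n:ℝ)+(i:ℝ)+1)) (m+1)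
    convert this using 2 with i
    all_goals (push_cast; ring)
  have h2 := hasSum_congr h hfun
  have h3 := h2.div_const ((m:ℝ)+1)
  refine hasSum_congr h3 ?_
  intro n
  have h1 : ((n:ℝ)+1) ≠ 0 := by positivity
  have h4 : ((n:ℝ)+(m:ℝ)+2) ≠ 0 := by positivity
  have h5 : ((m:ℝ)+1) ≠ 0 := by positivity
  field_simp
  ring


lemma hasSum_val {ι : Type*} {f : ι → ℝ} {S T : ℝ} (h : HasSum f S) (hST : S = T) : HasSum f T := hST ▸ h

lemma H_succ' (n : ℕ) : H (n+2) = H (n+1) + 1/((n:ℝ)+2) := by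
  have := H_succ (n+1)
  push_cast at this
  convert this using 3
  push_cast
  ring

lemma Hgen_succ' (n : ℕ) : Hgen 2 (n+2) = Hgen 2 (n+1) + 1/((n:ℝ)+2)^2 := by
  have := Hgen_succ 2 (n+1)
  push_cast at this
  convert this using 4
  push_cast
  ring

lemma Hgen2_one : Hgen 2 1 = 1 := by
  rw [show (1:ℕ) = 0 + 1 from rfl, Hgen_succ, Hgen_zero]; norm_num

/-! ### shifted base series -/

lemma hz2s : HasSum (fun n : ℕ => 1/((n:ℝ)+2)^2) (z2 - 1) := by
  have h := shift1 hz2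
  norm_num at h
  exact hasSum_congr h (fun n => by push_cast; ring_nf)

lemma hz3s : HasSum (fun n : ℕ => 1/((n:ℝ)+2)^3) (z3 - 1) := by
  have h := shift1 hz3
  norm_num at h
  exact hasSum_congr h (fun n => by push_cast; ring_nf)

lemma hz4s : HasSum (fun n : ℕ => 1/((n:ℝ)+2)^4) (z4 - 1) := by
  have h := shift1 hz4
  norm_num at h
  exact hasSum_congr h (fun n => by push_cast; ring_nf)

lemma hA2s : HasSum (fun n : ℕ => H (n+2)/((n:ℝ)+2)^2) (A2 - 1) := by
  have h := shift1 hA2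
  norm_num [H_one] at h
  exact hasSum_congr h (fun n => by push_cast; ring_nf)

lemma hA3s : HasSum (fun n : ℕ => H (n+2)/((n:ℝ)+2)^3) (A3 - 1) := by
  have h := shift1 hA3
  norm_num [H_one] at h
  exact hasSum_congr h (fun n => by push_cast; ring_nf)

lemma hBs : HasSum (fun n : ℕ => H (n+2)^2/((n:ℝ)+2)^2) (B - 1) := by
  have h := shift1 hB
  norm_num [H_one] at h
  exact hasSum_congr h (fun n => by push_cast; ring_nf)

lemma hZH2s : HasSum (fun n : ℕ => Hgen 2 (n+2)/((n:ℝ)+2)^2) (ZH2 - 1) := by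
  have h := shift1 hZH2
  norm_num [Hgen2_one] at h
  exact hasSum_congr h (fun n => by push_cast; ring_nf)

/-! ### derived 1-d series -/

lemma d1 : HasSum (fun m : ℕ => H (m+1)/((m:ℝ)+2)^2) (A2 - z3) := by
  refine hasSum_val (hasSum_congr (hA2s.sub hz3s) (fun n => ?_)) (by ring)
  rw [H_succ' n]
  have h2 : ((n:ℝ)+2) ≠ 0 := by positivity
  field_simp
  ring

lemma d2 : HasSum (fun m : ℕ => H (m+1)/((m:ℝ)+2)^3) (A3 - z4) := by
  refine hasSum_val (hasSum_congr (hA3s.sub hz4s) (fun n => ?_)) (by ring)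
  rw [H_succ' n]
  have h2 : ((n:ℝ)+2) ≠ 0 := by positivity
  field_simp
  ring

lemma d3 : HasSum (fun m : ℕ => Hgen 2 (m+1)/((m:ℝ)+2)^2) (ZH2 - z4) := by
  refine hasSum_val (hasSum_congr (hZH2s.sub hz4s) (fun n => ?_)) (by ring)
  rw [Hgen_succ' n]
  have h2 : ((n:ℝ)+2) ≠ 0 := by positivity
  field_simp
  ring

lemma d4 : HasSum (fun n : ℕ => H (n+1)^2/((n:ℝ)+2)^2) (B - 2*A3 + z4) := by
  refine hasSum_val (hasSum_congr ((hBs.sub (hA3s.mul_left 2)).add hz4s) (fun n => ?_)) (by ring)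
  rw [H_succ' n]
  have h2 : ((n:ℝ)+2) ≠ 0 := by positivity
  field_simp
  ring

lemma d5 : HasSum (fun m : ℕ => H (m+2) * H (m+1)/((m:ℝ)+2)^2) (B - A3) := by
  refine hasSum_val (hasSum_congr (hBs.sub hA3s) (fun n => ?_)) (by ring)
  rw [H_succ' n]
  have h2 : ((n:ℝ)+2) ≠ 0 := by positivity
  field_simp
  ring

lemma dTs : HasSum (fun n : ℕ => H (n+2)^2/((n:ℝ)+3)^2) (B - 2*A3 + z4 - 1/4) := by
  have h := shift1 d4
  norm_num [H_one] at h
  refine hasSum_val (hasSum_congr h (fun n => by push_cast; ring_nf)) (by ring)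

lemma d3s : HasSum (fun n : ℕ => Hgen 2 (n+2)/((n:ℝ)+3)^2) (ZH2 - z4 - 1/4) := by
  have h := shift1 d3
  norm_num [Hgen2_one] at h
  refine hasSum_val (hasSum_congr h (fun n => by push_cast; ring_nf)) (by ring)

noncomputable def Wval : ℝ := (B - 2*A3 + 2*z4 - ZH2)/2

lemma d6 : HasSum (fun n : ℕ => (H (n+2)^2 - Hgen 2 (n+2))/(2*((n:ℝ)+3)^2)) Wval := by
  refine hasSum_val (hasSum_congr ((dTs.sub d3s).div_const 2) (fun n => ?_)) ?_
  · rw [div_sub_div_same, div_div, mul_comm]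
  · rw [Wval]; ring


/-! ### finite identities -/

lemma FI1 (m : ℕ) :
    ∑ i ∈ range (m+1), (1:ℝ)/(((i:ℝ)+1)*((m:ℝ)-(i:ℝ)+1)) = 2*H (m+1)/((m:ℝ)+2) := by
  have key : ∀ i ∈ range (m+1), (1:ℝ)/(((i:ℝ)+1)*((m:ℝ)-(i:ℝ)+1))
      = (1/((i:ℝ)+1) + 1/((m:ℝ)-(i:ℝ)+1))/((m:ℝ)+2) := by
    intro i hi
    have hi' : (i:ℝ) ≤ (m:ℝ) := by
      exact_mod_cast Nat.lt_succ_iff.mp (Finset.mem_range.mp hi)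
    have h1 : ((i:ℝ)+1) ≠ 0 := by positivity
    have h2 : (0:ℝ) < (m:ℝ)-(i:ℝ)+1 := by linarith
    have h3 : ((m:ℝ)+2) ≠ 0 := by positivity
    field_simp
    ring
  rw [Finset.sum_congr rfl key, ← Finset.sum_div, Finset.sum_add_distrib]
  have hrefl : ∑ i ∈ range (m+1), (1:ℝ)/((m:ℝ)-(i:ℝ)+1) = H (m+1) := by
    have h := Finset.sum_range_reflect (fun i : ℕ => (1:ℝ)/((i:ℝ)+1)) (m+1)
    rw [← H_range (m+1), ← h]
    refine Finset.sum_congr rfl (fun i hi => ?_)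
    have hi' : i ≤ m := Nat.lt_succ_iff.mp (Finset.mem_range.mp hi)
    have hc : ((m+1-1-i : ℕ) : ℝ) = (m:ℝ) - (i:ℝ) := by
      have he : m+1-1-i = m - i := by omega
      rw [he, Nat.cast_sub hi']
    rw [hc]
  rw [H_range (m+1), hrefl]
  ring

lemma FI2 (m : ℕ) :
    ∑ i ∈ range (m+1), H (i+1)/((i:ℝ)+2) = (H (m+2)^2 - Hgen 2 (m+2))/2 := by
  induction m with
  | zero =>
      rw [show (0:ℕ)+2 = 1+1 from rfl]
      norm_num [H_succ' 0, Hgen_succ' 0, H_one, Hgen2_one]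
  | succ n ih =>
      rw [Finset.sum_range_succ, ih]
      have e1 : H (n+1+2) = H (n+2) + 1/((n:ℝ)+3) := by
        have := H_succ' (n+1); push_cast at this; convert this using 3 <;> push_cast <;> ring
      have e2 : Hgen 2 (n+1+2) = Hgen 2 (n+2) + 1/((n:ℝ)+3)^2 := by
        have := Hgen_succ' (n+1); push_cast at this; convert this using 4 <;> push_cast <;> ring
      rw [e1, e2]
      have h3 : ((n:ℝ)+3) ≠ 0 := by positivity
      have hc : ((n+1:ℕ):ℝ)+2 = (n:ℝ)+3 := by push_cast; ring
      rw [hc]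
      field_simp
      ring

/-! ### z2 tails -/

lemma tailz2 (j : ℕ) : HasSum (fun k : ℕ => 1/(((k:ℝ)+(j:ℝ)+2)^2)) (z2 - Hgen 2 (j+1)) := by
  have h := (hasSum_nat_add_iff' (f := fun n : ℕ => 1/((n:ℝ)+1)^2) (j+1)).mpr hz2
  have hs : ∑ i ∈ range (j+1), (1:ℝ)/((i:ℝ)+1)^2 = Hgen 2 (j+1) := Hgen_range 2 (j+1)
  rw [hs] at h
  exact hasSum_congr h (fun n => by push_cast; ring_nf)

/-! ### double sums : A2 = 2 z3 and friends -/

lemma hV2 : HasSum (fun p : ℕ×ℕ => 1/(((p.1:ℝ)+1)*((p.2:ℝ)+1)*((p.1:ℝ)+(p.2:ℝ)+2))) A2 := by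
  refine hasSum_prod_nn (fun p => by positivity) (g := fun j : ℕ => H (j+1)/((j:ℝ)+1)^2)
    (fun j => ?_) hA2
  have h := (P1 j).mul_left (1/((j:ℝ)+1))
  refine hasSum_val (hasSum_congr h (fun k => ?_)) ?_
  · have h1 : ((k:ℝ)+1) ≠ 0 := by positivity
    have h2 : ((j:ℝ)+1) ≠ 0 := by positivity
    have h3 : ((k:ℝ)+(j:ℝ)+2) ≠ 0 := by positivity
    field_simp
    ring
  · show 1/((j:ℝ)+1) * (H (j+1)/((j:ℝ)+1)) = H (j+1)/((j:ℝ)+1)^2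
    rw [div_mul_div_comm, one_mul]
    congr 1
    all_goals ring

lemma hg1 : HasSum (fun p : ℕ×ℕ => 1/(((p.1:ℝ)+1)*((p.1:ℝ)+(p.2:ℝ)+2)^2)) (A2 - z3) := by
  refine hasSum_antidiag (fun p => by positivity) (g := fun n : ℕ => H (n+1)/((n:ℝ)+2)^2)
    (fun n => ?_) d1
  have key : ∀ i ∈ range (n+1), (1:ℝ)/(((i:ℝ)+1)*(((i:ℝ)+((n-i : ℕ):ℝ)+2)^2))
      = (1/((n:ℝ)+2)^2) * (1/((i:ℝ)+1)) := by
    intro i hi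
    have hi' : i ≤ n := Nat.lt_succ_iff.mp (Finset.mem_range.mp hi)
    rw [Nat.cast_sub hi']
    have h1 : ((i:ℝ)+1) ≠ 0 := by positivity
    have h2 : ((n:ℝ)+2) ≠ 0 := by positivity
    have e : (i:ℝ)+((n:ℝ)-(i:ℝ))+2 = (n:ℝ)+2 := by ring
    rw [e]
    field_simp
  rw [Finset.sum_congr rfl key, ← Finset.mul_sum, H_range]
  ring

lemma hg2 : HasSum (fun p : ℕ×ℕ => 1/(((p.2:ℝ)+1)*((p.1:ℝ)+(p.2:ℝ)+2)^2)) (A2 - z3) := by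
  have h := (Equiv.prodComm ℕ ℕ).hasSum_iff.2 hg1
  exact hasSum_congr h (fun p => by
    rcases p with ⟨a, b⟩
    simp only [Function.comp_apply, Equiv.prodComm_apply, Prod.swap_prod_mk]
    ring)

lemma R2 : A2 = 2*z3 := by
  have h : HasSum (fun p : ℕ×ℕ => 1/(((p.1:ℝ)+1)*((p.2:ℝ)+1)*((p.1:ℝ)+(p.2:ℝ)+2)))
      (A2 - z3 + (A2 - z3)) := by
    refine hasSum_congr (hg1.add hg2) (fun p => ?_)
    have h1 : ((p.1:ℝ)+1) ≠ 0 := by positivity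
    have h2 : ((p.2:ℝ)+1) ≠ 0 := by positivity
    have h3 : ((p.1:ℝ)+(p.2:ℝ)+2) ≠ 0 := by positivity
    field_simp
    ring
  have := hV2.unique h
  linarith

lemma hV3 : HasSum (fun p : ℕ×ℕ => 1/(((p.1:ℝ)+1)^2*((p.2:ℝ)+1)*((p.1:ℝ)+(p.2:ℝ)+2))) A3 := by
  refine hasSum_prod_nn (fun p => by positivity) (g := fun j : ℕ => H (j+1)/((j:ℝ)+1)^3)
    (fun j => ?_) hA3
  have h := (P1 j).mul_left (1/((j:ℝ)+1)^2)
  refine hasSum_val (hasSum_congr h (fun k => ?_)) ?_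
  · have h1 : ((k:ℝ)+1) ≠ 0 := by positivity
    have h2 : ((j:ℝ)+1) ≠ 0 := by positivity
    have h3 : ((k:ℝ)+(j:ℝ)+2) ≠ 0 := by positivity
    field_simp
    ring
  · show 1/((j:ℝ)+1)^2 * (H (j+1)/((j:ℝ)+1)) = H (j+1)/((j:ℝ)+1)^3
    rw [div_mul_div_comm, one_mul]
    congr 1
    all_goals ring

lemma hV3' : HasSum (fun p : ℕ×ℕ => 1/(((p.1:ℝ)+1)*((p.2:ℝ)+1)^2*((p.1:ℝ)+(p.2:ℝ)+2))) A3 := by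
  have h := (Equiv.prodComm ℕ ℕ).hasSum_iff.2 hV3
  exact hasSum_congr h (fun p => by
    rcases p with ⟨a, b⟩
    simp only [Function.comp_apply, Equiv.prodComm_apply, Prod.swap_prod_mk]
    ring)

lemma hprod : HasSum (fun p : ℕ×ℕ => (1/((p.1:ℝ)+1)^2) * (1/((p.2:ℝ)+1)^2)) (z2*z2) := by
  refine hasSum_prod_nn (fun p => by positivity) (g := fun j : ℕ => (1/((j:ℝ)+1)^2) * z2)
    (fun j => hz2.mul_left _) (hz2.mul_right z2)

lemma R3 : 2*A3 = z2*z2 := by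
  have h : HasSum (fun p : ℕ×ℕ => (1/((p.1:ℝ)+1)^2) * (1/((p.2:ℝ)+1)^2)) (A3 + A3) := by
    refine hasSum_congr (hV3.add hV3') (fun p => ?_)
    have h1 : ((p.1:ℝ)+1) ≠ 0 := by positivity
    have h2 : ((p.2:ℝ)+1) ≠ 0 := by positivity
    have h3 : ((p.1:ℝ)+(p.2:ℝ)+2) ≠ 0 := by positivity
    field_simp
    ring
  have := hprod.unique h
  linarith

lemma hsq : HasSum (fun p : ℕ×ℕ => 1/(((p.1:ℝ)+1)^2*((p.1:ℝ)+(p.2:ℝ)+2)^2)) (ZH2 - z4) := by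
  refine hasSum_antidiag (fun p => by positivity) (g := fun n : ℕ => Hgen 2 (n+1)/((n:ℝ)+2)^2)
    (fun n => ?_) d3
  have key : ∀ i ∈ range (n+1), (1:ℝ)/(((i:ℝ)+1)^2*(((i:ℝ)+((n-i : ℕ):ℝ)+2)^2))
      = (1/((n:ℝ)+2)^2) * (1/((i:ℝ)+1)^2) := by
    intro i hi
    have hi' : i ≤ n := Nat.lt_succ_iff.mp (Finset.mem_range.mp hi)
    rw [Nat.cast_sub hi']
    have h1 : ((i:ℝ)+1) ≠ 0 := by positivity
    have h2 : ((n:ℝ)+2) ≠ 0 := by positivity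
    have e : (i:ℝ)+((n:ℝ)-(i:ℝ))+2 = (n:ℝ)+2 := by ring
    rw [e]
    field_simp
  rw [Finset.sum_congr rfl key, ← Finset.mul_sum, Hgen_range]
  ring

lemma hsq' : HasSum (fun p : ℕ×ℕ => 1/(((p.1:ℝ)+1)^2*((p.1:ℝ)+(p.2:ℝ)+2)^2)) (z2*z2 - ZH2) := by
  refine hasSum_prod_nn (fun p => by positivity)
    (g := fun j : ℕ => (1/((j:ℝ)+1)^2) * (z2 - Hgen 2 (j+1))) (fun j => ?_) ?_
  · have h := (tailz2 j).mul_left (1/((j:ℝ)+1)^2)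
    refine hasSum_congr h (fun k => ?_)
    have h1 : ((k:ℝ)+(j:ℝ)+2) ≠ 0 := by positivity
    have h2 : ((j:ℝ)+1) ≠ 0 := by positivity
    field_simp
    ring
  · refine hasSum_val (hasSum_congr ((hz2.mul_right z2).sub hZH2) (fun j => ?_)) (by ring)
    show 1/((j:ℝ)+1)^2 * z2 - Hgen 2 (j+1)/((j:ℝ)+1)^2 = 1/((j:ℝ)+1)^2 * (z2 - Hgen 2 (j+1))
    rw [mul_sub]
    congr 1
    rw [one_div, inv_mul_eq_div]

lemma R1 : z2*z2 - ZH2 = ZH2 - z4 := hsq'.unique hsq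

lemma hh1 : HasSum (fun p : ℕ×ℕ => 1/(((p.1:ℝ)+1)*((p.1:ℝ)+(p.2:ℝ)+2)^3)) (A3 - z4) := by
  refine hasSum_antidiag (fun p => by positivity) (g := fun n : ℕ => H (n+1)/((n:ℝ)+2)^3)
    (fun n => ?_) d2
  have key : ∀ i ∈ range (n+1), (1:ℝ)/(((i:ℝ)+1)*(((i:ℝ)+((n-i : ℕ):ℝ)+2)^3))
      = (1/((n:ℝ)+2)^3) * (1/((i:ℝ)+1)) := by
    intro i hi
    have hi' : i ≤ n := Nat.lt_succ_iff.mp (Finset.mem_range.mp hi)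
    rw [Nat.cast_sub hi']
    have h1 : ((i:ℝ)+1) ≠ 0 := by positivity
    have h2 : ((n:ℝ)+2) ≠ 0 := by positivity
    have e : (i:ℝ)+((n:ℝ)-(i:ℝ))+2 = (n:ℝ)+2 := by ring
    rw [e]
    field_simp
  rw [Finset.sum_congr rfl key, ← Finset.mul_sum, H_range]
  ring

lemma hh2 : HasSum (fun p : ℕ×ℕ => 1/(((p.2:ℝ)+1)*((p.1:ℝ)+(p.2:ℝ)+2)^3)) (A3 - z4) := by
  have h := (Equiv.prodComm ℕ ℕ).hasSum_iff.2 hh1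
  exact hasSum_congr h (fun p => by
    rcases p with ⟨a, b⟩
    simp only [Function.comp_apply, Equiv.prodComm_apply, Prod.swap_prod_mk]
    ring)

lemma hY : HasSum (fun p : ℕ×ℕ => 1/(((p.1:ℝ)+1)*((p.2:ℝ)+1)*((p.1:ℝ)+(p.2:ℝ)+2)^2))
    (2*(A3 - z4)) := by
  refine hasSum_val (hasSum_congr (hh1.add hh2) (fun p => ?_)) (by ring)
  have h1 : ((p.1:ℝ)+1) ≠ 0 := by positivity
  have h2 : ((p.2:ℝ)+1) ≠ 0 := by positivity
  have h3 : ((p.1:ℝ)+(p.2:ℝ)+2) ≠ 0 := by positivity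
  field_simp
  ring

lemma hsqswap : HasSum (fun p : ℕ×ℕ => 1/(((p.2:ℝ)+1)^2*((p.1:ℝ)+(p.2:ℝ)+2)^2)) (ZH2 - z4) := by
  have h := (Equiv.prodComm ℕ ℕ).hasSum_iff.2 hsq
  exact hasSum_congr h (fun p => by
    rcases p with ⟨a, b⟩
    simp only [Function.comp_apply, Equiv.prodComm_apply, Prod.swap_prod_mk]
    ring)

lemma R5 : z2*z2 = 2*(ZH2 - z4) + 2*(2*(A3 - z4)) := by
  have h : HasSum (fun p : ℕ×ℕ => (1/((p.1:ℝ)+1)^2) * (1/((p.2:ℝ)+1)^2))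
      (ZH2 - z4 + (ZH2 - z4) + 2*(2*(A3 - z4))) := by
    refine hasSum_congr ((hsq.add hsqswap).add (hY.mul_left 2)) (fun p => ?_)
    have h1 : ((p.1:ℝ)+1) ≠ 0 := by positivity
    have h2 : ((p.2:ℝ)+1) ≠ 0 := by positivity
    have h3 : ((p.1:ℝ)+(p.2:ℝ)+2) ≠ 0 := by positivity
    field_simp
    ring
  have := hprod.unique h
  linarith

/-! ### values -/

lemma vP : z2*z2 = (5/2)*z4 := by have r1 := R1; have r3 := R3; have r5 := R5; linarith
lemma vA3 : A3 = (5/4)*z4 := by have := vP; have r3 := R3; linarith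
lemma vZH2 : ZH2 = (7/4)*z4 := by have := vP; have r1 := R1; linarith


/-! ### triple sums -/

/-- permutation equivs on `(ℕ×ℕ)×ℕ` -/
def e2 : (ℕ×ℕ)×ℕ ≃ (ℕ×ℕ)×ℕ :=
  ⟨fun p => ((p.1.1, p.2), p.1.2), fun p => ((p.1.1, p.2), p.1.2),
    by rintro ⟨⟨a,b⟩,c⟩; rfl, by rintro ⟨⟨a,b⟩,c⟩; rfl⟩
def e3 : (ℕ×ℕ)×ℕ ≃ (ℕ×ℕ)×ℕ :=
  ⟨fun p => ((p.1.2, p.1.1), p.2), fun p => ((p.1.2, p.1.1), p.2),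
    by rintro ⟨⟨a,b⟩,c⟩; rfl, by rintro ⟨⟨a,b⟩,c⟩; rfl⟩
def e4 : (ℕ×ℕ)×ℕ ≃ (ℕ×ℕ)×ℕ :=
  ⟨fun p => ((p.1.2, p.2), p.1.1), fun p => ((p.2, p.1.1), p.1.2),
    by rintro ⟨⟨a,b⟩,c⟩; rfl, by rintro ⟨⟨a,b⟩,c⟩; rfl⟩
def e5 : (ℕ×ℕ)×ℕ ≃ (ℕ×ℕ)×ℕ :=
  ⟨fun p => ((p.2, p.1.1), p.1.2), fun p => ((p.1.2, p.2), p.1.1),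
    by rintro ⟨⟨a,b⟩,c⟩; rfl, by rintro ⟨⟨a,b⟩,c⟩; rfl⟩
def e6 : (ℕ×ℕ)×ℕ ≃ (ℕ×ℕ)×ℕ :=
  ⟨fun p => ((p.2, p.1.2), p.1.1), fun p => ((p.2, p.1.2), p.1.1),
    by rintro ⟨⟨a,b⟩,c⟩; rfl, by rintro ⟨⟨a,b⟩,c⟩; rfl⟩

/-- the master triple sum `U = ∑ 1/(abc(a+b+c))`, first evaluation. -/
lemma hUf1 : HasSum (fun p : (ℕ×ℕ)×ℕ =>
    1/(((p.1.1:ℝ)+1)*((p.1.2:ℝ)+1)*((p.2:ℝ)+1)*((p.1.1:ℝ)+(p.1.2:ℝ)+(p.2:ℝ)+3)))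
    (2*(B - A3)) := by
  refine hasSum_prod_nn (fun p => by positivity)
    (g := fun q : ℕ×ℕ => H (q.1+q.2+2)/(((q.1:ℝ)+1)*((q.2:ℝ)+1)*((q.1:ℝ)+(q.2:ℝ)+2)))
    (fun q => ?_) ?_
  · -- row over c, fixed (a,b)
    rcases q with ⟨a, b⟩
    have h := (P1 (a+b+1)).mul_left (1/(((a:ℝ)+1)*((b:ℝ)+1)))
    refine hasSum_val (hasSum_congr h (fun c => ?_)) ?_
    · have h1 : ((c:ℝ)+1) ≠ 0 := by positivity
      have h2 : ((a:ℝ)+1) ≠ 0 := by positivity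
      have h3 : ((b:ℝ)+1) ≠ 0 := by positivity
      have h4 : ((c:ℝ)+((a+b+1:ℕ):ℝ)+2) = (a:ℝ)+(b:ℝ)+(c:ℝ)+3 := by push_cast; ring
      rw [h4]
      have h5 : ((a:ℝ)+(b:ℝ)+(c:ℝ)+3) ≠ 0 := by positivity
      field_simp
    · have h4 : ((a+b+1:ℕ):ℝ)+1 = (a:ℝ)+(b:ℝ)+2 := by push_cast; ring
      rw [h4, show a+b+1+1 = a+b+2 from rfl]
      rw [div_mul_div_comm, one_mul]
  · -- outer: antidiagonal collapse to d5 * 2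
    refine hasSum_antidiag (fun q => div_nonneg (H_nonneg _) (by positivity))
      (g := fun n : ℕ => 2*(H (n+2) * H (n+1)/((n:ℝ)+2)^2)) (fun n => ?_) (d5.mul_left 2)
    have key : ∀ i ∈ range (n+1),
        H (i+(n-i)+2)/(((i:ℝ)+1)*(((n-i : ℕ):ℝ)+1)*((i:ℝ)+((n-i : ℕ):ℝ)+2))
        = (H (n+2)/((n:ℝ)+2)) * (1/(((i:ℝ)+1)*((n:ℝ)-(i:ℝ)+1))) := by
      intro i hi
      have hi' : i ≤ n := Nat.lt_succ_iff.mp (Finset.mem_range.mp hi)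
      have hn : i+(n-i)+2 = n+2 := by omega
      rw [hn, Nat.cast_sub hi']
      have h1 : ((i:ℝ)+1) ≠ 0 := by positivity
      have hii : (i:ℝ) ≤ (n:ℝ) := by exact_mod_cast hi'
      have h2 : (0:ℝ) < (n:ℝ)-(i:ℝ)+1 := by linarith
      have e : (i:ℝ)+((n:ℝ)-(i:ℝ))+2 = (n:ℝ)+2 := by ring
      rw [e]
      rw [div_mul_div_comm, mul_one]
      congr 1
      ring
    rw [Finset.sum_congr rfl key, ← Finset.mul_sum, FI1, div_mul_div_comm]
    show H (n+2) * (2*H (n+1)) / (((n:ℝ)+2)*((n:ℝ)+2)) = 2*(H (n+2)*H (n+1)/((n:ℝ)+2)^2)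
    rw [← mul_div_assoc]
    congr 1
    · ring
    · ring

/-- the skewed triple sum `W`: `∑ 1/(a(a+b)(a+b+c)^2)` (1-indexed). -/
lemma hF : HasSum (fun p : (ℕ×ℕ)×ℕ =>
    1/(((p.1.1:ℝ)+1)*((p.1.1:ℝ)+(p.1.2:ℝ)+2)*((p.1.1:ℝ)+(p.1.2:ℝ)+(p.2:ℝ)+3)^2)) Wval := by
  -- Step A : the (m,c) double sum
  have hW2 : HasSum (fun p : ℕ×ℕ => H (p.1+1)/(((p.1:ℝ)+2)*((p.1:ℝ)+(p.2:ℝ)+3)^2)) Wval := by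
    refine hasSum_antidiag (fun p => div_nonneg (H_nonneg _) (by positivity))
      (g := fun n : ℕ => (H (n+2)^2 - Hgen 2 (n+2))/(2*((n:ℝ)+3)^2)) (fun n => ?_) d6
    have key : ∀ i ∈ range (n+1),
        H (i+1)/(((i:ℝ)+2)*((i:ℝ)+((n-i : ℕ):ℝ)+3)^2)
        = (1/((n:ℝ)+3)^2) * (H (i+1)/((i:ℝ)+2)) := by
      intro i hi
      have hi' : i ≤ n := Nat.lt_succ_iff.mp (Finset.mem_range.mp hi)
      rw [Nat.cast_sub hi']
      have e : (i:ℝ)+((n:ℝ)-(i:ℝ))+3 = (n:ℝ)+3 := by ring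
      rw [e]
      rw [div_mul_div_comm, one_mul]
      congr 1
      ring
    rw [Finset.sum_congr rfl key, ← Finset.mul_sum, FI2, div_mul_div_comm, one_mul]
    show (H (n+2)^2 - Hgen 2 (n+2)) / (((n:ℝ)+3)^2*2) = (H (n+2)^2 - Hgen 2 (n+2))/(2*((n:ℝ)+3)^2)
    congr 1
    ring
  -- Step B : fiberwise collapse of Step A gives the 1-d outer series
  have hg2W : HasSum (fun m : ℕ => H (m+1)/((m:ℝ)+2) * (z2 - Hgen 2 (m+2))) Wval := by
    refine hW2.prod_fiberwise (fun m => ?_)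
    have h := (tailz2 (m+1)).mul_left (H (m+1)/((m:ℝ)+2))
    refine hasSum_val (hasSum_congr h (fun c => ?_)) ?_
    · have h4 : ((c:ℝ)+((m+1:ℕ):ℝ)+2) = (m:ℝ)+(c:ℝ)+3 := by push_cast; ring
      rw [h4, div_mul_div_comm, mul_one]
    · rfl
  -- Step C : rebuild the triple sum along the sigma decomposition
  have hsig : HasSum (fun x : Σ m : ℕ, Fin (m+1) × ℕ =>
      1/(((x.2.1.1:ℝ)+1)*((x.1:ℝ)+2)*((x.1:ℝ)+(x.2.2:ℝ)+3)^2)) Wval := by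
    refine hasSum_sigma_nn (fun x => by positivity)
      (g := fun m : ℕ => H (m+1)/((m:ℝ)+2) * (z2 - Hgen 2 (m+2))) (fun m => ?_) hg2W
    refine hasSum_prod_nn (fun x => by positivity)
      (g := fun i : Fin (m+1) => (1/(((i.1:ℝ)+1)*((m:ℝ)+2))) * (z2 - Hgen 2 (m+2)))
      (fun i => ?_) ?_
    · have h := (tailz2 (m+1)).mul_left (1/(((i.1:ℝ)+1)*((m:ℝ)+2)))
      refine hasSum_congr h (fun c => ?_)
      have h4 : ((c:ℝ)+((m+1:ℕ):ℝ)+2) = (m:ℝ)+(c:ℝ)+3 := by push_cast; ring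
      rw [h4, div_mul_div_comm, one_mul]
    · refine hasSum_val (hasSum_fintype _) ?_
      rw [Fin.sum_univ_eq_sum_range (fun i => (1/(((i:ℝ)+1)*((m:ℝ)+2))) * (z2 - Hgen 2 (m+2))) (m+1)]
      rw [← Finset.sum_mul]
      congr 1
      have key : ∀ i ∈ range (m+1), (1:ℝ)/(((i:ℝ)+1)*((m:ℝ)+2))
          = (1/((m:ℝ)+2)) * (1/((i:ℝ)+1)) := by
        intro i _
        rw [div_mul_div_comm, mul_one, mul_comm]
      rw [Finset.sum_congr rfl key, ← Finset.mul_sum, H_range]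
      rw [mul_comm, mul_one_div]
  -- transport along the equivalences
  have hE : HasSum ((fun p : (ℕ×ℕ)×ℕ =>
      1/(((p.1.1:ℝ)+1)*((p.1.1:ℝ)+(p.1.2:ℝ)+2)*((p.1.1:ℝ)+(p.1.2:ℝ)+(p.2:ℝ)+3)^2))
      ∘ (eSig.prodCongr (Equiv.refl ℕ))) Wval := by
    have hE2 : HasSum (((fun p : (ℕ×ℕ)×ℕ =>
        1/(((p.1.1:ℝ)+1)*((p.1.1:ℝ)+(p.1.2:ℝ)+2)*((p.1.1:ℝ)+(p.1.2:ℝ)+(p.2:ℝ)+3)^2))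
        ∘ (eSig.prodCongr (Equiv.refl ℕ))) ∘ (Equiv.sigmaProdDistrib (fun m : ℕ => Fin (m+1)) ℕ).symm) Wval := by
      refine hasSum_congr hsig (fun x => ?_)
      rcases x with ⟨m, ⟨⟨i, hi⟩, c⟩⟩
      have hi' : i ≤ m := Nat.lt_succ_iff.mp hi
      simp only [Function.comp_apply, Equiv.sigmaProdDistrib, Equiv.coe_fn_symm_mk,
        Equiv.prodCongr_apply, Equiv.coe_refl, Prod.map_apply, id_eq]
      show 1/(((i:ℝ)+1)*((m:ℝ)+2)*((m:ℝ)+(c:ℝ)+3)^2)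
          = 1/(((i:ℝ)+1)*((i:ℝ)+((m-i : ℕ):ℝ)+2)*((i:ℝ)+((m-i : ℕ):ℝ)+(c:ℝ)+3)^2)
      rw [Nat.cast_sub hi']
      ring_nf
    exact ((Equiv.sigmaProdDistrib (fun m : ℕ => Fin (m+1)) ℕ).symm.hasSum_iff).1 hE2
  exact ((eSig.prodCongr (Equiv.refl ℕ)).hasSum_iff).1 hE


/-! ### the six permuted copies of `W` and the value of `B` -/

lemma vB : B = (17/4)*z4 := by
  have hs2 := (e2.hasSum_iff).2 hF
  have hs3 := (e3.hasSum_iff).2 hF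
  have hs4 := (e4.hasSum_iff).2 hF
  have hs5 := (e5.hasSum_iff).2 hF
  have hs6 := (e6.hasSum_iff).2 hF
  have hsum := ((((hF.add hs2).add hs3).add hs4).add hs5).add hs6
  have h6 : HasSum (fun p : (ℕ×ℕ)×ℕ =>
      1/(((p.1.1:ℝ)+1)*((p.1.2:ℝ)+1)*((p.2:ℝ)+1)*((p.1.1:ℝ)+(p.1.2:ℝ)+(p.2:ℝ)+3)))
      (Wval+Wval+Wval+Wval+Wval+Wval) := by
    refine hasSum_congr hsum (fun p => ?_)
    rcases p with ⟨⟨a,b⟩,c⟩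
    show 1/(((a:ℝ)+1)*((a:ℝ)+(b:ℝ)+2)*((a:ℝ)+(b:ℝ)+(c:ℝ)+3)^2)
        + 1/(((a:ℝ)+1)*((a:ℝ)+(c:ℝ)+2)*((a:ℝ)+(c:ℝ)+(b:ℝ)+3)^2)
        + 1/(((b:ℝ)+1)*((b:ℝ)+(a:ℝ)+2)*((b:ℝ)+(a:ℝ)+(c:ℝ)+3)^2)
        + 1/(((b:ℝ)+1)*((b:ℝ)+(c:ℝ)+2)*((b:ℝ)+(c:ℝ)+(a:ℝ)+3)^2)
        + 1/(((c:ℝ)+1)*((c:ℝ)+(a:ℝ)+2)*((c:ℝ)+(a:ℝ)+(b:ℝ)+3)^2)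
        + 1/(((c:ℝ)+1)*((c:ℝ)+(b:ℝ)+2)*((c:ℝ)+(b:ℝ)+(a:ℝ)+3)^2)
        = 1/(((a:ℝ)+1)*((b:ℝ)+1)*((c:ℝ)+1)*((a:ℝ)+(b:ℝ)+(c:ℝ)+3))
    have h1 : ((a:ℝ)+1) ≠ 0 := by positivity
    have h2 : ((b:ℝ)+1) ≠ 0 := by positivity
    have h3 : ((c:ℝ)+1) ≠ 0 := by positivity
    have h4 : ((a:ℝ)+(b:ℝ)+2) ≠ 0 := by positivity
    have h5 : ((a:ℝ)+(c:ℝ)+2) ≠ 0 := by positivity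
    have h6 : ((b:ℝ)+(c:ℝ)+2) ≠ 0 := by positivity
    have h7 : ((a:ℝ)+(b:ℝ)+(c:ℝ)+3) ≠ 0 := by positivity
    have e1 : (a:ℝ)+(c:ℝ)+(b:ℝ)+3 = (a:ℝ)+(b:ℝ)+(c:ℝ)+3 := by ring
    have e2 : (b:ℝ)+(a:ℝ)+(c:ℝ)+3 = (a:ℝ)+(b:ℝ)+(c:ℝ)+3 := by ring
    have e3 : (b:ℝ)+(c:ℝ)+(a:ℝ)+3 = (a:ℝ)+(b:ℝ)+(c:ℝ)+3 := by ring
    have e4 : (c:ℝ)+(a:ℝ)+(b:ℝ)+3 = (a:ℝ)+(b:ℝ)+(c:ℝ)+3 := by ring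
    have e5 : (c:ℝ)+(b:ℝ)+(a:ℝ)+3 = (a:ℝ)+(b:ℝ)+(c:ℝ)+3 := by ring
    have e6 : (b:ℝ)+(a:ℝ)+2 = (a:ℝ)+(b:ℝ)+2 := by ring
    have e7 : (c:ℝ)+(a:ℝ)+2 = (a:ℝ)+(c:ℝ)+2 := by ring
    have e8 : (c:ℝ)+(b:ℝ)+2 = (b:ℝ)+(c:ℝ)+2 := by ring
    rw [e1, e2, e3, e4, e5, e6, e7, e8]
    set x : ℝ := (a:ℝ)+1 with hx
    set y : ℝ := (b:ℝ)+1 with hy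
    set z : ℝ := (c:ℝ)+1 with hz
    set s : ℝ := (a:ℝ)+(b:ℝ)+(c:ℝ)+3 with hs
    have hx0 : x ≠ 0 := by rw [hx]; positivity
    have hy0 : y ≠ 0 := by rw [hy]; positivity
    have hz0 : z ≠ 0 := by rw [hz]; positivity
    have hs0 : s ≠ 0 := by rw [hs]; positivity
    have hxyz : x + y + z = s := by rw [hx, hy, hz, hs]; ring
    have hab : (a:ℝ)+(b:ℝ)+2 = x + y := by rw [hx, hy]; ring
    have hac : (a:ℝ)+(c:ℝ)+2 = x + z := by rw [hx, hz]; ring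
    have hbc : (b:ℝ)+(c:ℝ)+2 = y + z := by rw [hy, hz]; ring
    rw [hab, hac, hbc]
    have pair : ∀ u v : ℝ, u ≠ 0 → v ≠ 0 → u + v ≠ 0 →
        1/(u*(u+v)*s^2) + 1/(v*(u+v)*s^2) = 1/(u*v*s^2) := by
      intro u v hu hv huv
      field_simp
      ring
    have hxy0 : x + y ≠ 0 := by rw [hx, hy]; positivity
    have hxz0 : x + z ≠ 0 := by rw [hx, hz]; positivity
    have hyz0 : y + z ≠ 0 := by rw [hy, hz]; positivity
    have p1 := pair x y hx0 hy0 hxy0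
    have p2 := pair x z hx0 hz0 hxz0
    have p3 := pair y z hy0 hz0 hyz0
    have tri : 1/(x*y*s^2) + 1/(x*z*s^2) + 1/(y*z*s^2) = 1/(x*y*z*s) := by
      rw [← hxyz]
      have hxyz0 : x + y + z ≠ 0 := hxyz ▸ hs0
      field_simp
      ring
    calc 1/(x*(x+y)*s^2) + 1/(x*(x+z)*s^2) + 1/(y*(x+y)*s^2) + 1/(y*(y+z)*s^2)
        + 1/(z*(x+z)*s^2) + 1/(z*(y+z)*s^2)
        = (1/(x*(x+y)*s^2) + 1/(y*(x+y)*s^2)) + (1/(x*(x+z)*s^2) + 1/(z*(x+z)*s^2))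
          + (1/(y*(y+z)*s^2) + 1/(z*(y+z)*s^2)) := by ring
      _ = 1/(x*y*s^2) + 1/(x*z*s^2) + 1/(y*z*s^2) := by rw [p1, p2, p3]
      _ = 1/(x*y*z*s) := tri
  have heq := hUf1.unique h6
  have hw : Wval = (B - 2*A3 + 2*z4 - ZH2)/2 := rfl
  rw [hw] at heq
  have h1 := vA3
  have h2 := vZH2
  linarith

/-! ### assembly series -/

lemma d7 : HasSum (fun m : ℕ => H (m+1)/(((m:ℝ)+1)*((m:ℝ)+2))) z2 := by
  have hCd : HasSum (fun p : ℕ×ℕ =>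
      1/(((p.1:ℝ)+1)*((p.1:ℝ)+(p.2:ℝ)+1)*((p.1:ℝ)+(p.2:ℝ)+2))) z2 := by
    refine hasSum_prod_nn (fun p => by positivity) (g := fun j : ℕ => 1/((j:ℝ)+1)^2)
      (fun j => ?_) hz2
    have h := (ttail j).mul_left (1/((j:ℝ)+1))
    refine hasSum_val (hasSum_congr h (fun k => ?_)) ?_
    · rw [div_mul_div_comm, one_mul]
      congr 1
      ring
    · rw [div_mul_div_comm, one_mul]
      congr 1
      ring
  refine hasSum_antidiag_inv hCd (fun n => ?_)
  have key : ∀ i ∈ range (n+1),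
      (1:ℝ)/(((i:ℝ)+1)*((i:ℝ)+((n-i : ℕ):ℝ)+1)*((i:ℝ)+((n-i : ℕ):ℝ)+2))
      = (1/(((n:ℝ)+1)*((n:ℝ)+2))) * (1/((i:ℝ)+1)) := by
    intro i hi
    have hi' : i ≤ n := Nat.lt_succ_iff.mp (Finset.mem_range.mp hi)
    rw [Nat.cast_sub hi']
    have e : (i:ℝ)+((n:ℝ)-(i:ℝ))+1 = (n:ℝ)+1 := by ring
    have e' : (i:ℝ)+((n:ℝ)-(i:ℝ))+2 = (n:ℝ)+2 := by ring
    rw [e, e']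
    rw [div_mul_div_comm, one_mul]
    congr 1
    ring
  rw [Finset.sum_congr rfl key, ← Finset.mul_sum, H_range]
  rw [mul_comm, mul_one_div]

lemma d8 : HasSum (fun m : ℕ => H (m+1)/(((m:ℝ)+1)*((m:ℝ)+2)^2)) (z2 - A2 + z3) := by
  refine hasSum_val (hasSum_congr (d7.sub d1) (fun m => ?_)) (by ring)
  have aux : 1/(((m:ℝ)+1)*((m:ℝ)+2)) - 1/((m:ℝ)+2)^2 = 1/(((m:ℝ)+1)*((m:ℝ)+2)^2) := by
    have h1 : ((m:ℝ)+1) ≠ 0 := by positivity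
    have h2 : ((m:ℝ)+2) ≠ 0 := by positivity
    field_simp
    ring
  calc H (m+1)/(((m:ℝ)+1)*((m:ℝ)+2)) - H (m+1)/((m:ℝ)+2)^2
      = H (m+1) * (1/(((m:ℝ)+1)*((m:ℝ)+2)) - 1/((m:ℝ)+2)^2) := by
        rw [mul_sub, mul_one_div, mul_one_div]
    _ = H (m+1) * (1/(((m:ℝ)+1)*((m:ℝ)+2)^2)) := by rw [aux]
    _ = H (m+1)/(((m:ℝ)+1)*((m:ℝ)+2)^2) := by rw [mul_one_div]

lemma d9 : HasSum (fun m : ℕ => 1/(((m:ℝ)+1)^2*((m:ℝ)+2)^2)) (2*z2 - 3) := by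
  refine hasSum_val (hasSum_congr ((hz2.add hz2s).sub (t0.mul_left 2)) (fun m => ?_)) (by ring)
  have h1 : ((m:ℝ)+1) ≠ 0 := by positivity
  have h2 : ((m:ℝ)+2) ≠ 0 := by positivity
  field_simp
  ring

lemma d8s : HasSum (fun n : ℕ => H (n+2)/(((n:ℝ)+2)*((n:ℝ)+3)^2)) (z2 - A2 + z3 - 1/4) := by
  have h := shift1 d8
  norm_num [H_one] at h
  refine hasSum_val (hasSum_congr h (fun n => by push_cast; ring_nf)) (by ring)

lemma d9s : HasSum (fun n : ℕ => 1/(((n:ℝ)+2)^2*((n:ℝ)+3)^2)) (2*z2 - 3 - 1/4) := by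
  have h := shift1 d9
  refine hasSum_val (hasSum_congr h (fun n => ?_)) ?_
  · push_cast
    congr 1
    ring
  · norm_num

lemma hSfinal : HasSum (fun k : ℕ => H (k+1)^2/((k:ℝ)+3)^2) (-3 + 2*z3 + 11*z4/4) := by
  have h := (dTs.sub (d8s.mul_left 2)).add d9s
  refine hasSum_val (hasSum_congr h (fun k => ?_)) ?_
  · rw [H_succ' k]
    have h2 : ((k:ℝ)+2) ≠ 0 := by positivity
    have h3 : ((k:ℝ)+3) ≠ 0 := by positivity
    field_simp
    ring
  · have h1 := R2
    have h2 := vB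
    have h3 := vA3
    linarith

end EulerAux

namespace EulerAux

lemma zeta_nat_eq (k : ℕ) (hk : 1 < k) (zr : ℝ)
    (hz : HasSum (fun n : ℕ => 1/((n:ℝ)+1)^k) zr) : riemannZeta (k:ℂ) = (zr:ℂ) := by
  have h0 : riemannZeta ((k:ℕ):ℂ) = ∑' n : ℕ, 1 / (n:ℂ)^(k:ℕ) := zeta_nat_eq_tsum_of_gt_one hk
  have hc : HasSum (fun n : ℕ => 1/((n:ℂ)+1)^(k:ℕ)) (zr:ℂ) := by
    have h := Complex.ofRealCLM.hasSum hz
    refine hasSum_congr h (fun n => ?_)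
    simp only [Complex.ofRealCLM_apply]
    push_cast
    ring
  have hshift : HasSum (fun n : ℕ => 1/(((n+1:ℕ)):ℂ)^(k:ℕ)) (zr:ℂ) := by
    refine hasSum_congr hc (fun n => ?_)
    push_cast
    ring
  have hfull : HasSum (fun n : ℕ => 1/((n:ℂ))^(k:ℕ)) ((zr:ℂ) + ∑ i ∈ Finset.range 1, 1/((i:ℂ))^(k:ℕ)) := by
    exact (hasSum_nat_add_iff (f := fun n : ℕ => 1/((n:ℂ))^(k:ℕ)) 1).1 hshift
  have hz0 : (∑ i ∈ Finset.range 1, 1/((i:ℂ))^(k:ℕ)) = 0 := by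
    simp [zero_pow (by omega : k ≠ 0)]
  rw [hz0, add_zero] at hfull
  rw [h0, hfull.tsum_eq]

lemma zeta3_eq : riemannZeta 3 = (z3:ℂ) := by
  have h := zeta_nat_eq 3 (by norm_num) z3 hz3
  norm_num at h
  exact h

lemma zeta4_eq : riemannZeta 4 = (z4:ℂ) := by
  have h := zeta_nat_eq 4 (by norm_num) z4 hz4
  norm_num at h
  exact h

end EulerAux

theorem euler_sum_14 :
    HasSum (fun k : ℕ => (H (k+1) : ℂ) ^ 2 / ((k : ℂ) + 3) ^ 2) (-3 + 2 * riemannZeta 3 + 11 * riemannZeta 4 / 4) := by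
  have hC := Complex.ofRealCLM.hasSum EulerAux.hSfinal
  have hC' : HasSum (fun k : ℕ => (H (k+1) : ℂ) ^ 2 / ((k : ℂ) + 3) ^ 2)
      (((-3 + 2*EulerAux.z3 + 11*EulerAux.z4/4 : ℝ)):ℂ) := by
    refine EulerAux.hasSum_congr hC (fun k => ?_)
    simp only [Complex.ofRealCLM_apply]
    push_cast
    ring
  have hval : (((-3 + 2*EulerAux.z3 + 11*EulerAux.z4/4 : ℝ)):ℂ)
      = -3 + 2 * riemannZeta 3 + 11 * riemannZeta 4 / 4 := by
    rw [EulerAux.zeta3_eq, EulerAux.zeta4_eq]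
    push_cast
    ring
  rw [hval] at hC'
  exact hC'
end

section
/- For every positive integer n and every integer p ≥ 1, the finite sum ∑_{k=1}^{n} H(k)^{(p)}/k equals H(n)^{(p)}·H(n) − ∑_{k=1}^{n} H(k)/k^p + H(n)^{(p+1)}. -/
open scoped BigOperators

theorem finite_sum_17 (n p : ℕ) (hn : 1 ≤ n) (hp : 1 ≤ p) :
    ∑ k ∈ Finset.Icc 1 n, Hgen p k / k =
      Hgen p n * H n - (∑ k ∈ Finset.Icc 1 n, H k / (k : ℝ) ^ p) + Hgen (p + 1) n := by
  have hH : ∀ m : ℕ, H (m + 1) = H m + 1 / (m + 1 : ℝ) := by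
    intro m
    simp [H, Finset.sum_Icc_succ_top (Nat.le_add_left 1 m)]
  have hHg : ∀ q m : ℕ, Hgen q (m + 1) = Hgen q m + 1 / ((m + 1 : ℝ)) ^ q := by
    intro q m
    simp [Hgen, Finset.sum_Icc_succ_top (Nat.le_add_left 1 m)]
  induction n, hn using Nat.le_induction with
  | base => simp [H, Hgen]
  | succ n hn ih =>
    have hpos : (0 : ℝ) < (n : ℝ) + 1 := by positivity
    rw [Finset.sum_Icc_succ_top (Nat.le_add_left 1 n),
      Finset.sum_Icc_succ_top (Nat.le_add_left 1 n), ih, hH, hHg, hHg]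
    push_cast
    field_simp
    ring
end

section
/- For every positive integer n, the finite sum ∑_{k=1}^{n} H(k)^2/k equals (1/3)H(n)^3 − (1/3)H(n)^{(3)} + ∑_{k=1}^{n} H(k)/k^2. -/
open scoped BigOperators

theorem finite_sum_18 (n : ℕ) (hn : 1 ≤ n) :
    ∑ k ∈ Finset.Icc 1 n, H k ^ 2 / k =
      (1 / 3) * H n ^ 3 - (1 / 3) * Hgen 3 n + ∑ k ∈ Finset.Icc 1 n, H k / (k : ℝ) ^ 2 := by
  induction n with
  | zero => omega
  | succ m ih =>
    rcases Nat.lt_or_ge m 1 with hm | hm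
    · interval_cases m
      simp [H, Hgen]
    · have hs : (1 : ℕ) ≤ m + 1 := by omega
      have hH : H (m + 1) = H m + 1 / (m + 1 : ℝ) := by
        simp [H, Finset.sum_Icc_succ_top hs]
      have hG : Hgen 3 (m + 1) = Hgen 3 m + 1 / ((m : ℝ) + 1) ^ 3 := by
        simp [Hgen, Finset.sum_Icc_succ_top hs]
      rw [Finset.sum_Icc_succ_top hs, Finset.sum_Icc_succ_top hs, ih hm, hH, hG]
      have hne : ((m : ℝ) + 1) ≠ 0 := by positivity
      push_cast
      field_simp
      ring
end
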